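/- arXiv:2108.02101 — 4 statements merged into one kernel-verified Lean document; each statement's English description precedes it below -/
import Mathlib

section
/- Let Zₙ be the size of the n-th generation of a Galton–Watson process whose child distribution Z₁ is supported on positive integers with finite mean μ = E Z₁, and suppose Z₁* ⪯ Z₁ (Z₁ is NBUE). Then Zₙ* ⪯ Zₙ for all n, and consequently P[Zₙ ≥ t μⁿ] ≤ e^{1−t} and P[Zₙ ≤ t μⁿ] ≤ t for all t > 0. -/
open MeasureTheory

/-- Convolution of two laws on `ℕ`. -/
noncomputable def nconv (ρ σ : Measure ℕ) : Measure ℕ :=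
  (ρ.prod σ).map (fun p => p.1 + p.2)

/-- Law of the sum of `k` i.i.d. copies of a law `ρ` on `ℕ`. -/
noncomputable def nfold (ρ : Measure ℕ) : ℕ → Measure ℕ
  | 0 => Measure.dirac 0
  | (k + 1) => nconv (nfold ρ k) ρ

/-- Law of the `n`-th generation `Zₙ` of a Galton–Watson process with child law `ν`:
`Z₀ = 1` and `Z_{n+1}` is the sum of `Z₁ ~ ν` independent copies of `Zₙ`. -/
noncomputable def gwLaw (ν : Measure ℕ) : ℕ → Measure ℕ
  | 0 => Measure.dirac 1
  | (n + 1) => Measure.sum (fun l => ν {l} • nfold (gwLaw ν n) l)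

/-- NBUE for an integer-valued law `ρ`: `ρ^e ⪯ ρ`, encoded multiplied through by the
mean: `Σ_{n>k} ρ[n,∞) ≤ (E ρ) · ρ(k,∞)` for all `k`. -/
def NBUE (ρ : Measure ℕ) : Prop :=
  ∀ k : ℕ, (∑' n : ℕ, if k < n then ρ (Set.Ici n) else 0)
    ≤ (∑' j : ℕ, (j : ENNReal) * ρ {j}) * ρ (Set.Ioi k)

namespace GW13

open ENNReal

lemma measNat_apply {α : Type*} [MeasurableSpace α] [MeasurableSingletonClass α] [Countable α]
    (μ : Measure α) (s : Set α) :
    μ s = ∑' n : α, s.indicator (fun n => μ {n}) n := by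
  rw [← tsum_subtype]
  conv_lhs => rw [show s = ⋃ n ∈ s, {n} from (Set.biUnion_of_singleton s).symm]
  rw [measure_biUnion s.to_countable]
  · intro a _ b _ hab
    simp [Function.onFun, Set.disjoint_singleton, hab]
  · intro b _; exact MeasurableSet.of_discrete

noncomputable def tl (ρ : Measure ℕ) (k : ℕ) : ℝ≥0∞ := ρ (Set.Ioi k)

noncomputable def gg (ρ : Measure ℕ) (k : ℕ) : ℝ≥0∞ := ∑' j : ℕ, tl ρ (k + j)

noncomputable def mn (ρ : Measure ℕ) : ℝ≥0∞ := ∑' j : ℕ, (j : ℝ≥0∞) * ρ {j}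

lemma tl_eq (ρ : Measure ℕ) (k : ℕ) : tl ρ k = ∑' n : ℕ, if k < n then ρ {n} else 0 := by
  rw [tl, measNat_apply]
  congr 1; ext n
  simp [Set.indicator_apply]

lemma tl_antitone (ρ : Measure ℕ) : Antitone (tl ρ) := by
  intro a b hab
  exact measure_mono (Set.Ioi_subset_Ioi hab)

lemma tl_le_one (ρ : Measure ℕ) [IsProbabilityMeasure ρ] (k : ℕ) : tl ρ k ≤ 1 :=
  prob_le_one

lemma tsum_split (f : ℕ → ℝ≥0∞) (m : ℕ) :
    ∑' n : ℕ, f n = (∑ i ∈ Finset.range m, f i) + ∑' j : ℕ, f (m + j) := by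
  induction m with
  | zero => simp
  | succ m ih =>
    rw [ih, Finset.sum_range_succ, add_assoc]
    congr 1
    rw [tsum_eq_zero_add' ENNReal.summable, Nat.add_zero]
    refine congrArg (fun z => f m + z) (tsum_congr fun j => ?_)
    congr 1; omega

lemma tsum_cond_shift (h : ℕ → ℝ≥0∞) (c : ℕ) :
    (∑' i : ℕ, if c ≤ i then h i else 0) = ∑' j : ℕ, h (c + j) := by
  rw [tsum_split (fun i => if c ≤ i then h i else 0) c]
  have h1 : (∑ i ∈ Finset.range c, if c ≤ i then h i else 0) = 0 := by
    apply Finset.sum_eq_zero; intro i hi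
    simp only [Finset.mem_range] at hi
    simp [Nat.not_le.mpr hi]
  rw [h1, zero_add]
  congr 1; ext j; simp

lemma gg_succ (ρ : Measure ℕ) (k : ℕ) : gg ρ k = tl ρ k + gg ρ (k + 1) := by
  rw [gg, tsum_eq_zero_add' ENNReal.summable]
  congr 1
  rw [gg]; congr 1; ext j; congr 1; omega

lemma count_lemma (d : ℕ) : (∑' i : ℕ, if i < d then (1 : ℝ≥0∞) else 0) = d := by
  rw [tsum_eq_sum (s := Finset.range d) (by intro b hb; simp [Finset.mem_range] at hb; simp [hb])]
  rw [Finset.sum_ite_of_true (fun i hi => Finset.mem_range.mp hi)]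
  simp

lemma gg_eq (ρ : Measure ℕ) (k : ℕ) :
    gg ρ k = ∑' m : ℕ, ρ {m} * ((m - k : ℕ) : ℝ≥0∞) := by
  rw [gg]
  have h1 : ∀ j : ℕ, tl ρ (k + j) = ∑' m : ℕ, if k + j < m then ρ {m} else 0 :=
    fun j => tl_eq ρ (k + j)
  simp_rw [h1]
  rw [ENNReal.tsum_comm]
  congr 1; ext m
  have h2 : ∀ j : ℕ, (if k + j < m then ρ {m} else 0) = ρ {m} * (if j < m - k then (1:ℝ≥0∞) else 0) := by
    intro j
    by_cases h : k + j < m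
    · rw [if_pos h, if_pos (by omega), mul_one]
    · rw [if_neg h, if_neg (by omega), mul_zero]
  simp_rw [h2]
  rw [ENNReal.tsum_mul_left, count_lemma]

lemma mn_eq_gg_zero (ρ : Measure ℕ) : mn ρ = gg ρ 0 := by
  rw [gg_eq, mn]
  congr 1; ext j
  simp [Nat.sub_zero, mul_comm]

lemma NBUE_iff (ρ : Measure ℕ) :
    (∀ k : ℕ, (∑' n : ℕ, if k < n then ρ (Set.Ici n) else 0)
      ≤ (∑' j : ℕ, (j : ENNReal) * ρ {j}) * ρ (Set.Ioi k)) ↔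
    ∀ k, gg ρ k ≤ mn ρ * tl ρ k := by
  have key : ∀ k : ℕ, (∑' n : ℕ, if k < n then ρ (Set.Ici n) else 0) = gg ρ k := by
    intro k
    have h1 : (∑' n : ℕ, if k < n then ρ (Set.Ici n) else 0)
        = ∑' n : ℕ, if k + 1 ≤ n then ρ (Set.Ici n) else 0 := rfl
    rw [h1, tsum_cond_shift (fun n => ρ (Set.Ici n)) (k + 1), gg]
    congr 1; ext j
    rw [tl]
    congr 1
    ext n
    simp only [Set.mem_Ici, Set.mem_Ioi]
    omega
  exact forall_congr' fun k => by rw [key k]; rfl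

lemma tsum_meas_singleton (μ : Measure ℕ) : ∑' n : ℕ, μ {n} = μ Set.univ := by
  rw [measNat_apply μ Set.univ]; simp

lemma tl_nconv (ρ σ : Measure ℕ) [SFinite ρ] [SFinite σ] (k : ℕ) :
    tl (nconv ρ σ) k = ∑' p : ℕ × ℕ, if k < p.1 + p.2 then ρ {p.1} * σ {p.2} else 0 := by
  classical
  rw [tl, nconv, Measure.map_apply Measurable.of_discrete MeasurableSet.of_discrete]
  rw [measNat_apply (ρ.prod σ)]
  refine tsum_congr fun p => ?_
  have hp : (ρ.prod σ) {p} = ρ {p.1} * σ {p.2} := by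
    rw [show ({p} : Set (ℕ × ℕ)) = {p.1} ×ˢ {p.2} by simp, Measure.prod_prod]
  rw [Set.indicator_apply]
  simp only [Set.mem_preimage, Set.mem_Ioi, hp]

instance nconv_prob (ρ σ : Measure ℕ) [IsProbabilityMeasure ρ] [IsProbabilityMeasure σ] :
    IsProbabilityMeasure (nconv ρ σ) :=
  Measure.isProbabilityMeasure_map Measurable.of_discrete.aemeasurable

lemma tl_nconv_right (ρ σ : Measure ℕ) [IsProbabilityMeasure ρ] [IsProbabilityMeasure σ] (k : ℕ) :
    tl (nconv ρ σ) k = ∑' m : ℕ, σ {m} * (if m ≤ k then tl ρ (k - m) else 1) := by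
  rw [tl_nconv]
  have hp : (∑' p : ℕ × ℕ, if k < p.1 + p.2 then ρ {p.1} * σ {p.2} else 0)
      = ∑' (i : ℕ), ∑' (m : ℕ), (if k < i + m then ρ {i} * σ {m} else 0) :=
    ENNReal.tsum_prod (f := fun i m => if k < i + m then ρ {i} * σ {m} else 0)
  rw [hp, ENNReal.tsum_comm]
  refine tsum_congr fun m => ?_
  by_cases h : m ≤ k
  · rw [if_pos h]
    have h2 : ∀ i : ℕ, (if k < i + m then ρ {i} * σ {m} else 0)
        = σ {m} * (if k - m < i then ρ {i} else 0) := by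
      intro i; by_cases hi : k < i + m
      · rw [if_pos hi, if_pos (by omega), mul_comm]
      · rw [if_neg hi, if_neg (by omega), mul_zero]
    simp_rw [h2]
    rw [ENNReal.tsum_mul_left, tl_eq]
  · rw [if_neg h, mul_one]
    have h2 : ∀ i : ℕ, (if k < i + m then ρ {i} * σ {m} else 0) = σ {m} * ρ {i} := by
      intro i; rw [if_pos (by omega), mul_comm]
    simp_rw [h2]
    rw [ENNReal.tsum_mul_left, tsum_meas_singleton, measure_univ, mul_one]

lemma tl_nconv_left (ρ σ : Measure ℕ) [IsProbabilityMeasure ρ] [IsProbabilityMeasure σ] (k : ℕ) :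
    tl (nconv ρ σ) k = ∑' m : ℕ, ρ {m} * (if m ≤ k then tl σ (k - m) else 1) := by
  rw [tl_nconv]
  have hp : (∑' p : ℕ × ℕ, if k < p.1 + p.2 then ρ {p.1} * σ {p.2} else 0)
      = ∑' (m : ℕ), ∑' (i : ℕ), (if k < m + i then ρ {m} * σ {i} else 0) :=
    ENNReal.tsum_prod (f := fun m i => if k < m + i then ρ {m} * σ {i} else 0)
  rw [hp]
  refine tsum_congr fun m => ?_
  by_cases h : m ≤ k
  · rw [if_pos h]
    have h2 : ∀ i : ℕ, (if k < m + i then ρ {m} * σ {i} else 0)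
        = ρ {m} * (if k - m < i then σ {i} else 0) := by
      intro i; by_cases hi : k < m + i
      · rw [if_pos hi, if_pos (by omega)]
      · rw [if_neg hi, if_neg (by omega), mul_zero]
    simp_rw [h2]
    rw [ENNReal.tsum_mul_left, tl_eq]
  · rw [if_neg h, mul_one]
    have h2 : ∀ i : ℕ, (if k < m + i then ρ {m} * σ {i} else 0) = ρ {m} * σ {i} := by
      intro i; rw [if_pos (by omega)]
    simp_rw [h2]
    rw [ENNReal.tsum_mul_left, tsum_meas_singleton, measure_univ, mul_one]

lemma tl_le_tl_nconv_left (ρ σ : Measure ℕ) [IsProbabilityMeasure ρ] [IsProbabilityMeasure σ]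
    (k : ℕ) : tl ρ k ≤ tl (nconv ρ σ) k := by
  rw [tl_nconv_right]
  have h1 : tl ρ k = ∑' m : ℕ, σ {m} * tl ρ k := by
    rw [ENNReal.tsum_mul_right, tsum_meas_singleton, measure_univ, one_mul]
  rw [h1]
  refine ENNReal.tsum_le_tsum fun m => ?_
  refine mul_le_mul_right ?_ _
  by_cases h : m ≤ k
  · rw [if_pos h]; exact tl_antitone ρ (by omega)
  · rw [if_neg h]; exact tl_le_one ρ k

lemma tl_le_tl_nconv_right (ρ σ : Measure ℕ) [IsProbabilityMeasure ρ] [IsProbabilityMeasure σ]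
    (k : ℕ) : tl σ k ≤ tl (nconv ρ σ) k := by
  rw [tl_nconv_right, tl_eq]
  refine ENNReal.tsum_le_tsum fun m => ?_
  by_cases h : k < m
  · rw [if_pos h, if_neg (by omega), mul_one]
  · rw [if_neg h]; exact zero_le

lemma mn_nconv (ρ σ : Measure ℕ) [IsProbabilityMeasure ρ] [IsProbabilityMeasure σ] :
    mn (nconv ρ σ) = mn ρ + mn σ := by
  rw [mn_eq_gg_zero, gg]
  simp only [zero_add]
  simp_rw [tl_nconv_right]
  rw [ENNReal.tsum_comm]
  have h1 : ∀ m : ℕ, (∑' k : ℕ, σ {m} * (if m ≤ k then tl ρ (k - m) else 1))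
      = σ {m} * ((m : ℝ≥0∞) + mn ρ) := by
    intro m
    rw [ENNReal.tsum_mul_left]
    congr 1
    rw [tsum_split (fun k => if m ≤ k then tl ρ (k - m) else 1) m]
    congr 1
    · rw [Finset.sum_congr rfl (fun i hi => if_neg (by simp [Finset.mem_range] at hi; omega))]
      simp
    · rw [mn_eq_gg_zero, gg]
      refine tsum_congr fun j => ?_
      rw [if_pos (by omega)]
      congr 1
      omega
  simp_rw [h1]
  have h2 : ∀ m : ℕ, σ {m} * ((m : ℝ≥0∞) + mn ρ)
      = (m : ℝ≥0∞) * σ {m} + σ {m} * mn ρ := by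
    intro m; rw [mul_add, mul_comm (σ {m})]
  simp_rw [h2]
  rw [ENNReal.tsum_add, ENNReal.tsum_mul_right, tsum_meas_singleton, measure_univ, one_mul]
  show mn σ + mn ρ = mn ρ + mn σ
  exact add_comm _ _

lemma gg_nconv_le (ρ σ : Measure ℕ) [IsProbabilityMeasure ρ] [IsProbabilityMeasure σ]
    (hσ : ∀ k, gg σ k ≤ mn σ * tl σ k) (k : ℕ) :
    gg (nconv ρ σ) k ≤ mn σ * tl (nconv ρ σ) k + gg ρ k := by
  have lhs_eq : gg (nconv ρ σ) k
      = ∑' m : ℕ, ∑' j : ℕ, ρ {m} * (if m ≤ k + j then tl σ (k + j - m) else 1) := by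
    rw [gg]
    have h0 : ∀ j : ℕ, tl (nconv ρ σ) (k + j)
        = ∑' m : ℕ, ρ {m} * (if m ≤ k + j then tl σ (k + j - m) else 1) :=
      fun j => tl_nconv_left ρ σ (k + j)
    simp_rw [h0]
    rw [ENNReal.tsum_comm]
  rw [lhs_eq]
  have inner : ∀ m : ℕ, (∑' j : ℕ, ρ {m} * (if m ≤ k + j then tl σ (k + j - m) else 1))
      ≤ ρ {m} * (mn σ * (if m ≤ k then tl σ (k - m) else 1)) + ρ {m} * ((m - k : ℕ) : ℝ≥0∞) := by
    intro m
    rw [ENNReal.tsum_mul_left, ← mul_add]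
    refine mul_le_mul_right ?_ _
    by_cases h : m ≤ k
    · rw [if_pos h]
      have he : ∀ j : ℕ, (if m ≤ k + j then tl σ (k + j - m) else 1) = tl σ ((k - m) + j) := by
        intro j; rw [if_pos (by omega)]; congr 1; omega
      simp_rw [he]
      have : (∑' j : ℕ, tl σ (k - m + j)) = gg σ (k - m) := rfl
      rw [this]
      calc gg σ (k - m) ≤ mn σ * tl σ (k - m) := hσ (k - m)
        _ ≤ mn σ * tl σ (k - m) + ((m - k : ℕ) : ℝ≥0∞) := le_add_of_nonneg_right zero_le
    · rw [if_neg h, mul_one]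
      rw [tsum_split (fun j => if m ≤ k + j then tl σ (k + j - m) else 1) (m - k)]
      have e1 : (∑ i ∈ Finset.range (m - k), if m ≤ k + i then tl σ (k + i - m) else 1)
          = ((m - k : ℕ) : ℝ≥0∞) := by
        rw [Finset.sum_congr rfl (fun i hi => if_neg (by simp [Finset.mem_range] at hi; omega))]
        simp
      have e2 : (∑' j : ℕ, if m ≤ k + (m - k + j) then tl σ (k + (m - k + j) - m) else 1)
          = mn σ := by
        rw [mn_eq_gg_zero, gg]
        refine tsum_congr fun j => ?_
        rw [if_pos (by omega)]
        congr 1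
        omega
      rw [e1, e2, add_comm]
  calc (∑' m : ℕ, ∑' j : ℕ, ρ {m} * (if m ≤ k + j then tl σ (k + j - m) else 1))
      ≤ ∑' m : ℕ, (ρ {m} * (mn σ * (if m ≤ k then tl σ (k - m) else 1))
            + ρ {m} * ((m - k : ℕ) : ℝ≥0∞)) := ENNReal.tsum_le_tsum inner
    _ = mn σ * (∑' m : ℕ, ρ {m} * (if m ≤ k then tl σ (k - m) else 1)) + gg ρ k := by
        rw [ENNReal.tsum_add]
        congr 1
        · simp_rw [mul_left_comm (ρ _) (mn σ)]
          rw [ENNReal.tsum_mul_left]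
        · rw [gg_eq]
    _ = mn σ * tl (nconv ρ σ) k + gg ρ k := by rw [← tl_nconv_left]

lemma tl_dirac0 (k : ℕ) : tl (Measure.dirac 0) k = 0 := by
  rw [tl, Measure.dirac_apply' 0 MeasurableSet.of_discrete]
  simp

lemma gg_dirac0 (k : ℕ) : gg (Measure.dirac 0) k = 0 := by
  rw [gg]
  simp [tl_dirac0]

instance nfold_prob (ρ : Measure ℕ) [IsProbabilityMeasure ρ] (l : ℕ) :
    IsProbabilityMeasure (nfold ρ l) := by
  induction l with
  | zero => rw [nfold]; infer_instance
  | succ l ih => rw [nfold]; exact nconv_prob _ _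

lemma mn_nfold (ρ : Measure ℕ) [IsProbabilityMeasure ρ] (l : ℕ) :
    mn (nfold ρ l) = l * mn ρ := by
  induction l with
  | zero => rw [nfold, mn_eq_gg_zero, gg_dirac0]; simp
  | succ l ih =>
    rw [nfold, mn_nconv, ih]
    push_cast
    ring

lemma tl_nfold_mono (ρ : Measure ℕ) [IsProbabilityMeasure ρ] {i l : ℕ} (h : i ≤ l) (k : ℕ) :
    tl (nfold ρ i) k ≤ tl (nfold ρ l) k := by
  induction l with
  | zero => rw [Nat.le_zero.mp h]
  | succ l ih =>
    rcases Nat.lt_or_ge i (l + 1) with h' | h'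
    · calc tl (nfold ρ i) k ≤ tl (nfold ρ l) k := ih (by omega)
        _ ≤ tl (nfold ρ (l + 1)) k := by
            rw [show nfold ρ (l + 1) = nconv (nfold ρ l) ρ from rfl]
            exact tl_le_tl_nconv_left _ _ k
    · rw [show i = l + 1 by omega]

lemma gg_nfold_le (ρ : Measure ℕ) [IsProbabilityMeasure ρ]
    (hρ : ∀ k, gg ρ k ≤ mn ρ * tl ρ k) (l k : ℕ) :
    gg (nfold ρ l) k ≤ mn ρ * ∑ i ∈ Finset.range l, tl (nfold ρ (i + 1)) k := by
  induction l with
  | zero => rw [show nfold ρ 0 = Measure.dirac 0 from rfl, gg_dirac0]; exact zero_le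
  | succ l ih =>
    have step : gg (nfold ρ (l + 1)) k
        ≤ mn ρ * tl (nfold ρ (l + 1)) k + gg (nfold ρ l) k := by
      rw [show nfold ρ (l + 1) = nconv (nfold ρ l) ρ from rfl]
      exact gg_nconv_le (nfold ρ l) ρ hρ k
    calc gg (nfold ρ (l + 1)) k
        ≤ mn ρ * tl (nfold ρ (l + 1)) k + gg (nfold ρ l) k := step
      _ ≤ mn ρ * tl (nfold ρ (l + 1)) k
            + mn ρ * ∑ i ∈ Finset.range l, tl (nfold ρ (i + 1)) k := by
          exact add_le_add le_rfl ih
      _ = mn ρ * ∑ i ∈ Finset.range (l + 1), tl (nfold ρ (i + 1)) k := by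
          rw [Finset.sum_range_succ, mul_add, add_comm]

lemma gw_succ_apply (ν : Measure ℕ) (n : ℕ) (s : Set ℕ) :
    gwLaw ν (n + 1) s = ∑' l : ℕ, ν {l} * (nfold (gwLaw ν n) l) s := by
  rw [show gwLaw ν (n + 1) = Measure.sum (fun l => ν {l} • nfold (gwLaw ν n) l) from rfl]
  rw [Measure.sum_apply _ MeasurableSet.of_discrete]
  refine tsum_congr fun l => ?_
  rw [Measure.smul_apply, smul_eq_mul]

lemma gw_prob (ν : Measure ℕ) [IsProbabilityMeasure ν] (n : ℕ) :
    IsProbabilityMeasure (gwLaw ν n) := by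
  induction n with
  | zero => rw [show gwLaw ν 0 = Measure.dirac 1 from rfl]; infer_instance
  | succ n ih =>
    constructor
    rw [gw_succ_apply]
    have h1 : ∀ l : ℕ, ν {l} * (nfold (gwLaw ν n) l) Set.univ = ν {l} := by
      intro l
      haveI := ih
      rw [measure_univ, mul_one]
    simp_rw [h1]
    rw [tsum_meas_singleton, measure_univ]

lemma tl_gw_succ (ν : Measure ℕ) (n k : ℕ) :
    tl (gwLaw ν (n + 1)) k = ∑' l : ℕ, ν {l} * tl (nfold (gwLaw ν n) l) k :=
  gw_succ_apply ν n (Set.Ioi k)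

lemma gg_gw_succ (ν : Measure ℕ) (n k : ℕ) :
    gg (gwLaw ν (n + 1)) k = ∑' l : ℕ, ν {l} * gg (nfold (gwLaw ν n) l) k := by
  rw [gg]
  simp_rw [tl_gw_succ]
  rw [ENNReal.tsum_comm]
  refine tsum_congr fun l => ?_
  rw [gg, ENNReal.tsum_mul_left]

lemma mn_gw0 (ν : Measure ℕ) : mn (gwLaw ν 0) = 1 := by
  rw [show gwLaw ν 0 = Measure.dirac 1 from rfl, mn]
  rw [tsum_eq_single 1 ?_]
  · rw [Measure.dirac_apply' 1 MeasurableSet.of_discrete]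
    simp
  · intro b hb
    rw [Measure.dirac_apply' 1 MeasurableSet.of_discrete]
    simp only [Set.indicator_apply, Set.mem_singleton_iff]
    rw [if_neg (by omega)]
    simp

lemma mn_gw_succ (ν : Measure ℕ) [IsProbabilityMeasure ν] (n : ℕ)
    [IsProbabilityMeasure (gwLaw ν n)] :
    mn (gwLaw ν (n + 1)) = mn ν * mn (gwLaw ν n) := by
  have h0 : mn (gwLaw ν (n + 1)) = ∑' l : ℕ, ν {l} * mn (nfold (gwLaw ν n) l) := by
    rw [mn_eq_gg_zero, gg_gw_succ]
    refine tsum_congr fun l => ?_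
    rw [mn_eq_gg_zero]
  rw [h0]
  have h1 : ∀ l : ℕ, ν {l} * mn (nfold (gwLaw ν n) l)
      = ((l : ℝ≥0∞) * ν {l}) * mn (gwLaw ν n) := by
    intro l
    rw [mn_nfold]
    ring
  simp_rw [h1]
  rw [ENNReal.tsum_mul_right]
  rfl

lemma swap_sum (w g : ℕ → ℝ≥0∞) :
    ∑' l : ℕ, w l * (∑ i ∈ Finset.range l, g i)
      = ∑' i : ℕ, (∑' l : ℕ, if i < l then w l else 0) * g i := by
  have h1 : ∀ l : ℕ, w l * (∑ i ∈ Finset.range l, g i)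
      = ∑' i : ℕ, (if i < l then w l * g i else 0) := by
    intro l
    have h2 : (∑ i ∈ Finset.range l, g i) = ∑' i : ℕ, (if i < l then g i else 0) := by
      rw [tsum_eq_sum (s := Finset.range l)
        (by intro b hb; simp only [Finset.mem_range] at hb; rw [if_neg hb])]
      exact Finset.sum_congr rfl fun i hi => (if_pos (Finset.mem_range.mp hi)).symm
    rw [h2, ← ENNReal.tsum_mul_left]
    refine tsum_congr fun i => ?_
    by_cases h : i < l
    · rw [if_pos h, if_pos h]
    · rw [if_neg h, if_neg h, mul_zero]
  simp_rw [h1]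
  rw [ENNReal.tsum_comm]
  refine tsum_congr fun i => ?_
  have h3 : ∀ l : ℕ, (if i < l then w l * g i else 0) = (if i < l then w l else 0) * g i := by
    intro l
    by_cases h : i < l
    · rw [if_pos h, if_pos h]
    · rw [if_neg h, if_neg h, zero_mul]
  simp_rw [h3]
  rw [ENNReal.tsum_mul_right]

lemma swap_sum' (w g : ℕ → ℝ≥0∞) :
    ∑' l : ℕ, w l * (∑ s ∈ Finset.range (l - 1), g s)
      = ∑' s : ℕ, (∑' l : ℕ, if s + 1 < l then w l else 0) * g s := by
  have h1 : ∀ l : ℕ, w l * (∑ s ∈ Finset.range (l - 1), g s)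
      = ∑' s : ℕ, (if s + 1 < l then w l * g s else 0) := by
    intro l
    have h2 : (∑ s ∈ Finset.range (l - 1), g s) = ∑' s : ℕ, (if s + 1 < l then g s else 0) := by
      rw [tsum_eq_sum (s := Finset.range (l - 1))
        (by intro b hb; simp only [Finset.mem_range] at hb; rw [if_neg (by omega)])]
      exact Finset.sum_congr rfl fun i hi => by
        rw [if_pos (by have := Finset.mem_range.mp hi; omega)]
    rw [h2, ← ENNReal.tsum_mul_left]
    refine tsum_congr fun i => ?_
    by_cases h : i + 1 < l
    · rw [if_pos h, if_pos h]
    · rw [if_neg h, if_neg h, mul_zero]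
  simp_rw [h1]
  rw [ENNReal.tsum_comm]
  refine tsum_congr fun i => ?_
  have h3 : ∀ l : ℕ, (if i + 1 < l then w l * g i else 0) = (if i + 1 < l then w l else 0) * g i := by
    intro l
    by_cases h : i + 1 < l
    · rw [if_pos h, if_pos h]
    · rw [if_neg h, if_neg h, zero_mul]
  simp_rw [h3]
  rw [ENNReal.tsum_mul_right]

lemma dominance (ν : Measure ℕ) [IsProbabilityMeasure ν] (hν0 : ν {0} = 0)
    (hnb : ∀ k, gg ν k ≤ mn ν * tl ν k) (f : ℕ → ℝ≥0∞) (hf : ∀ s, f s ≤ f (s + 1)) :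
    ∑' i : ℕ, tl ν i * f i ≤ mn ν * ∑' l : ℕ, ν {l} * f (l - 1) := by
  set d : ℕ → ℝ≥0∞ := fun s => f (s + 1) - f s with hd
  have hfd : ∀ s, f (s + 1) = f s + d s := fun s => (add_tsub_cancel_of_le (hf s)).symm
  have hexp : ∀ i, f i = f 0 + ∑ s ∈ Finset.range i, d s := by
    intro i
    induction i with
    | zero => simp
    | succ i ih => rw [Finset.sum_range_succ, ← add_assoc, ← ih, hfd i]
  have tsum_tl : ∑' i : ℕ, tl ν i = mn ν := by
    rw [mn_eq_gg_zero, gg]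
    exact tsum_congr fun j => by rw [zero_add]
  have lhs_eq : ∑' i : ℕ, tl ν i * f i
      = f 0 * mn ν + ∑' s : ℕ, d s * gg ν (s + 1) := by
    have h1 : ∀ i : ℕ, tl ν i * f i
        = tl ν i * f 0 + tl ν i * (∑ s ∈ Finset.range i, d s) := by
      intro i
      rw [← mul_add, ← hexp i]
    simp_rw [h1]
    rw [ENNReal.tsum_add]
    congr 1
    · rw [ENNReal.tsum_mul_right, tsum_tl, mul_comm]
    · rw [swap_sum (fun i => tl ν i) d]
      refine tsum_congr fun s => ?_
      rw [mul_comm]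
      congr 1
      have : (∑' l : ℕ, if s < l then tl ν l else 0)
          = ∑' l : ℕ, if s + 1 ≤ l then tl ν l else 0 := rfl
      rw [this, tsum_cond_shift (fun l => tl ν l) (s + 1), gg]
  have rhs_eq : ∑' l : ℕ, ν {l} * f (l - 1)
      = f 0 + ∑' s : ℕ, d s * tl ν (s + 1) := by
    have h1 : ∀ l : ℕ, ν {l} * f (l - 1)
        = ν {l} * f 0 + ν {l} * (∑ s ∈ Finset.range (l - 1), d s) := by
      intro l
      rw [← mul_add, ← hexp (l - 1)]
    simp_rw [h1]
    rw [ENNReal.tsum_add]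
    congr 1
    · rw [ENNReal.tsum_mul_right, tsum_meas_singleton, measure_univ, one_mul]
    · rw [swap_sum' (fun l => ν {l}) d]
      refine tsum_congr fun s => ?_
      rw [← tl_eq, mul_comm]
  rw [lhs_eq, rhs_eq, mul_add]
  refine add_le_add (le_of_eq (mul_comm _ _)) ?_
  calc ∑' s : ℕ, d s * gg ν (s + 1)
      ≤ ∑' s : ℕ, d s * (mn ν * tl ν (s + 1)) :=
        ENNReal.tsum_le_tsum fun s => mul_le_mul_right (hnb (s + 1)) _
    _ = mn ν * ∑' s : ℕ, d s * tl ν (s + 1) := by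
        have h3 : ∀ s : ℕ, d s * (mn ν * tl ν (s + 1)) = mn ν * (d s * tl ν (s + 1)) := by
          intro s; ring
        simp_rw [h3]
        rw [ENNReal.tsum_mul_left]

lemma gg_dirac1 (k : ℕ) : gg (Measure.dirac 1) k = ((1 - k : ℕ) : ℝ≥0∞) := by
  rw [gg_eq]
  rw [tsum_eq_single 1 ?_]
  · rw [Measure.dirac_apply' 1 MeasurableSet.of_discrete]
    simp
  · intro b hb
    rw [Measure.dirac_apply' 1 MeasurableSet.of_discrete]
    simp only [Set.indicator_apply, Set.mem_singleton_iff]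
    rw [if_neg (by omega)]
    simp

lemma tl_dirac1 (k : ℕ) : tl (Measure.dirac 1) k = if k < 1 then 1 else 0 := by
  rw [tl, Measure.dirac_apply' 1 MeasurableSet.of_discrete]
  simp [Set.indicator_apply]

lemma gw_main (ν : Measure ℕ) [IsProbabilityMeasure ν] (hν0 : ν {0} = 0)
    (hnb : ∀ k, gg ν k ≤ mn ν * tl ν k) (n : ℕ) :
    mn (gwLaw ν n) = (mn ν) ^ n ∧
      ∀ k, gg (gwLaw ν n) k ≤ mn (gwLaw ν n) * tl (gwLaw ν n) k := by
  induction n with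
  | zero =>
    refine ⟨by rw [mn_gw0, pow_zero], fun k => ?_⟩
    rw [show gwLaw ν 0 = Measure.dirac 1 from rfl, show mn (Measure.dirac 1) = 1 from mn_gw0 ν, gg_dirac1, tl_dirac1]
    rcases Nat.eq_zero_or_pos k with hk | hk
    · subst hk; simp
    · rw [if_neg (by omega), show 1 - k = 0 by omega]
      simp
  | succ n ih =>
    haveI hpn := gw_prob ν n
    obtain ⟨hmn, hNB⟩ := ih
    have hmn' : mn (gwLaw ν (n + 1)) = mn ν * mn (gwLaw ν n) := mn_gw_succ ν n
    refine ⟨by rw [hmn', hmn, pow_succ, mul_comm], fun k => ?_⟩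
    set a := mn (gwLaw ν n) with ha
    set f : ℕ → ℝ≥0∞ := fun i => tl (nfold (gwLaw ν n) (i + 1)) k with hfdef
    have hf : ∀ s, f s ≤ f (s + 1) := fun s => tl_nfold_mono _ (by omega) k
    have hfl : ∀ l : ℕ, ν {l} * f (l - 1) = ν {l} * tl (nfold (gwLaw ν n) l) k := by
      intro l
      match l with
      | 0 => rw [hν0]; simp
      | (m + 1) => rfl
    calc gg (gwLaw ν (n + 1)) k
        = ∑' l : ℕ, ν {l} * gg (nfold (gwLaw ν n) l) k := gg_gw_succ ν n k
      _ ≤ ∑' l : ℕ, ν {l} * (a * ∑ i ∈ Finset.range l, f i) :=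
          ENNReal.tsum_le_tsum fun l => mul_le_mul_right (gg_nfold_le _ hNB l k) _
      _ = a * ∑' l : ℕ, ν {l} * ∑ i ∈ Finset.range l, f i := by
          have h1 : ∀ l : ℕ, ν {l} * (a * ∑ i ∈ Finset.range l, f i)
              = a * (ν {l} * ∑ i ∈ Finset.range l, f i) := fun l => by ring
          simp_rw [h1]
          rw [ENNReal.tsum_mul_left]
      _ = a * ∑' i : ℕ, tl ν i * f i := by
          rw [swap_sum (fun l => ν {l}) f]
          congr 1
          refine tsum_congr fun i => ?_
          rw [← tl_eq]
      _ ≤ a * (mn ν * ∑' l : ℕ, ν {l} * f (l - 1)) :=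
          mul_le_mul_right (dominance ν hν0 hnb f hf) a
      _ = (mn ν * a) * ∑' l : ℕ, ν {l} * tl (nfold (gwLaw ν n) l) k := by
          simp_rw [hfl]
          ring
      _ = mn (gwLaw ν (n + 1)) * tl (gwLaw ν (n + 1)) k := by
          rw [hmn', tl_gw_succ]

lemma gg0_le_add (ρ : Measure ℕ) [IsProbabilityMeasure ρ] (j : ℕ) :
    gg ρ 0 ≤ (j : ℝ≥0∞) + gg ρ j := by
  induction j with
  | zero => simp
  | succ j ih =>
    calc gg ρ 0 ≤ (j : ℝ≥0∞) + gg ρ j := ih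
      _ ≤ (j : ℝ≥0∞) + (1 + gg ρ (j + 1)) := by
          refine add_le_add le_rfl ?_
          rw [gg_succ ρ j]
          exact add_le_add (tl_le_one ρ j) le_rfl
      _ = ((j + 1 : ℕ) : ℝ≥0∞) + gg ρ (j + 1) := by push_cast; ring

lemma concentration (ρ : Measure ℕ) [IsProbabilityMeasure ρ]
    (hnb : ∀ k, gg ρ k ≤ mn ρ * tl ρ k)
    (hM1 : 1 ≤ mn ρ) (hMfin : mn ρ ≠ ⊤) (t : ℝ) (ht : 0 < t) :
    (ρ {k : ℕ | t * (mn ρ).toReal ≤ (k : ℝ)}).toReal ≤ Real.exp (1 - t) ∧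
    (ρ {k : ℕ | (k : ℝ) ≤ t * (mn ρ).toReal}).toReal ≤ t := by
  set Mr := (mn ρ).toReal with hMr
  have hMr1 : 1 ≤ Mr := by
    rw [hMr, show (1 : ℝ) = (1 : ℝ≥0∞).toReal by simp]
    exact ENNReal.toReal_mono hMfin hM1
  have hMrpos : 0 < Mr := lt_of_lt_of_le one_pos hMr1
  have htl_ne : ∀ k, tl ρ k ≠ ⊤ :=
    fun k => (lt_of_le_of_lt (tl_le_one ρ k) ENNReal.one_lt_top).ne
  have hgg_le : ∀ k, gg ρ k ≤ mn ρ := by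
    intro k
    rw [mn_eq_gg_zero]
    induction k with
    | zero => exact le_rfl
    | succ k ih => exact le_trans (by rw [gg_succ ρ k]; exact le_add_self) ih
  have hgg_ne : ∀ k, gg ρ k ≠ ⊤ :=
    fun k => (lt_of_le_of_lt (hgg_le k) (lt_top_iff_ne_top.mpr hMfin)).ne
  set τ : ℕ → ℝ := fun k => (tl ρ k).toReal with hτ
  set γ : ℕ → ℝ := fun k => (gg ρ k).toReal with hγ
  have hτ0 : ∀ k, 0 ≤ τ k := fun k => ENNReal.toReal_nonneg
  have hτ1 : ∀ k, τ k ≤ 1 := by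
    intro k
    rw [hτ, show (1 : ℝ) = (1 : ℝ≥0∞).toReal by simp]
    exact ENNReal.toReal_mono ENNReal.one_ne_top (tl_le_one ρ k)
  have hτanti : ∀ {i j : ℕ}, i ≤ j → τ j ≤ τ i := fun {i j} h =>
    ENNReal.toReal_mono (htl_ne i) (tl_antitone ρ h)
  have hγnn : ∀ k, 0 ≤ γ k := fun k => ENNReal.toReal_nonneg
  have hγsucc : ∀ k, γ k = τ k + γ (k + 1) := by
    intro k
    rw [hγ, hτ]
    simp only
    rw [gg_succ ρ k, ENNReal.toReal_add (htl_ne k) (hgg_ne (k + 1))]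
  have hγτ : ∀ k, γ k ≤ Mr * τ k := by
    intro k
    rw [hγ, hMr, hτ]
    simp only
    rw [← ENNReal.toReal_mul]
    exact ENNReal.toReal_mono (ENNReal.mul_ne_top hMfin (htl_ne k)) (hnb k)
  have hγzero : γ 0 = Mr := by rw [hγ, hMr]; simp only; rw [mn_eq_gg_zero]
  have hq0 : 0 ≤ 1 - 1 / Mr := by
    rw [sub_nonneg, div_le_one hMrpos]; exact hMr1
  have hgeo : ∀ k, γ k ≤ Mr * (1 - 1 / Mr) ^ k := by
    intro k
    induction k with
    | zero => rw [pow_zero, mul_one, ← hγzero]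
    | succ k ih =>
      have h1 : γ (k + 1) = γ k - τ k := by rw [hγsucc k]; ring
      have h2 : γ k / Mr ≤ τ k := by
        rw [div_le_iff₀ hMrpos]
        nlinarith [hγτ k]
      calc γ (k + 1) = γ k - τ k := h1
        _ ≤ γ k - γ k / Mr := by linarith
        _ = (1 - 1 / Mr) * γ k := by field_simp
        _ ≤ (1 - 1 / Mr) * (Mr * (1 - 1 / Mr) ^ k) := mul_le_mul_of_nonneg_left ih hq0
        _ = Mr * (1 - 1 / Mr) ^ (k + 1) := by ring
  have hgeoexp : ∀ k : ℕ, (1 - 1 / Mr) ^ k ≤ Real.exp (-(k : ℝ) / Mr) := by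
    intro k
    have h1 : 1 - 1 / Mr ≤ Real.exp (-(1 / Mr)) := by
      have := Real.add_one_le_exp (-(1 / Mr))
      linarith
    calc (1 - 1 / Mr) ^ k ≤ (Real.exp (-(1 / Mr))) ^ k := pow_le_pow_left₀ hq0 h1 k
      _ = Real.exp (-(k : ℝ) / Mr) := by
          rw [← Real.exp_nat_mul]
          congr 1
          ring
  have hgammaIco : ∀ i j : ℕ, i ≤ j → γ i = (∑ s ∈ Finset.Ico i j, τ s) + γ j := by
    intro i j hij
    induction j, hij using Nat.le_induction with
    | base => simp
    | succ j hij ih =>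
      rw [ih, hγsucc j, Finset.sum_Ico_succ_top hij]
      ring
  have upper_core : ∀ X : ℕ, 1 ≤ X → Mr ≤ X → τ (X - 1) ≤ Real.exp (1 - X / Mr) := by
    intro X hX1 hMX
    set y : ℝ := X - Mr with hy
    have hy0 : 0 ≤ y := by rw [hy]; linarith
    set i : ℕ := ⌊y⌋₊ with hi
    set θ : ℝ := y - i with hθdef
    have hiy : (i : ℝ) ≤ y := Nat.floor_le hy0
    have hθ0 : 0 ≤ θ := by rw [hθdef]; linarith
    have hθ1 : θ ≤ 1 := by
      have h := Nat.lt_floor_add_one y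
      rw [hθdef]
      push_cast at h ⊢
      linarith
    set j : ℕ := X - 1 with hj
    have hjr : (j : ℝ) = (X : ℝ) - 1 := by
      rw [hj]
      push_cast [hX1]
      ring
    have hij : i ≤ j := by
      have h1 : (i : ℝ) ≤ (j : ℝ) := by rw [hjr]; rw [hy] at hiy; linarith
      exact_mod_cast h1
    have hsum : ((j : ℝ) - i) * τ j ≤ (∑ s ∈ Finset.Ico (i + 1) (j + 1), τ s) := by
      have h1 : ∀ s ∈ Finset.Ico (i + 1) (j + 1), τ j ≤ τ s := by
        intro s hs
        simp only [Finset.mem_Ico] at hs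
        exact hτanti (by omega)
      have h2 := Finset.card_nsmul_le_sum (Finset.Ico (i + 1) (j + 1)) τ (τ j) h1
      rw [Nat.card_Ico, show (j + 1 - (i + 1)) = j - i by omega] at h2
      have h4 : ((j - i : ℕ) : ℝ) = (j : ℝ) - i := by
        push_cast [hij]
        ring
      calc ((j : ℝ) - i) * τ j = ((j - i : ℕ) : ℝ) * τ j := by rw [h4]
        _ = (j - i : ℕ) • τ j := (nsmul_eq_mul _ _).symm
        _ ≤ _ := h2
    have step1 : Mr * τ j ≤ γ i - θ * τ i := by
      have e1 : γ i = τ i + ((∑ s ∈ Finset.Ico (i + 1) (j + 1), τ s) + γ (j + 1)) := by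
        rw [hγsucc i, hgammaIco (i + 1) (j + 1) (by omega)]
      have e2 : τ j ≤ τ i := hτanti hij
      have e3 : 0 ≤ γ (j + 1) := hγnn _
      have e4 : Mr = (j : ℝ) - i + 1 - θ := by
        rw [hθdef, hjr, hy]; ring
      have e5 : 0 ≤ (1 - θ) * (τ i - τ j) :=
        mul_nonneg (by linarith) (by linarith)
      rw [e4]
      nlinarith [hsum, e1, e3, e5]
    have step2 : γ i - θ * τ i ≤ γ i * (1 - θ / Mr) := by
      have h1 : γ i / Mr ≤ τ i := by
        rw [div_le_iff₀ hMrpos]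
        nlinarith [hγτ i]
      have h2 : θ * (γ i / Mr) ≤ θ * τ i := mul_le_mul_of_nonneg_left h1 hθ0
      have e : γ i * (1 - θ / Mr) = γ i - θ * (γ i / Mr) := by ring
      rw [e]
      linarith
    have step3 : γ i * (1 - θ / Mr) ≤ Mr * Real.exp (1 - X / Mr) := by
      have h1 : 0 ≤ 1 - θ / Mr := by
        rw [sub_nonneg, div_le_one hMrpos]
        linarith
      have h2 : γ i * (1 - θ / Mr) ≤ (Mr * Real.exp (-(i : ℝ) / Mr)) * (1 - θ / Mr) := by
        refine mul_le_mul_of_nonneg_right ?_ h1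
        calc γ i ≤ Mr * (1 - 1 / Mr) ^ i := hgeo i
          _ ≤ Mr * Real.exp (-(i : ℝ) / Mr) :=
              mul_le_mul_of_nonneg_left (hgeoexp i) (le_of_lt hMrpos)
      have h3 : 1 - θ / Mr ≤ Real.exp (-(θ / Mr)) := by
        have := Real.add_one_le_exp (-(θ / Mr))
        linarith
      have h4 : (Mr * Real.exp (-(i : ℝ) / Mr)) * (1 - θ / Mr)
          ≤ (Mr * Real.exp (-(i : ℝ) / Mr)) * Real.exp (-(θ / Mr)) := by
        refine mul_le_mul_of_nonneg_left h3 ?_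
        positivity
      have h6 : (i : ℝ) + θ = (X : ℝ) - Mr := by rw [hθdef, hy]; ring
      have h5 : (Mr * Real.exp (-(i : ℝ) / Mr)) * Real.exp (-(θ / Mr))
          = Mr * Real.exp (1 - X / Mr) := by
        rw [mul_assoc, ← Real.exp_add]
        congr 2
        rw [show -(θ / Mr) = -θ / Mr by ring, ← add_div,
          show -(i : ℝ) + -θ = Mr - (X : ℝ) by linarith, sub_div, div_self hMrpos.ne']
      linarith [h2, h4, h5.le, h5.ge]
    have final : Mr * τ j ≤ Mr * Real.exp (1 - X / Mr) :=
      le_trans step1 (le_trans step2 step3)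
    exact (mul_le_mul_iff_right₀ hMrpos).mp final
  constructor
  · by_cases ht1 : t ≤ 1
    · have h1 : (ρ {k : ℕ | t * Mr ≤ (k : ℝ)}).toReal ≤ 1 := by
        rw [show (1 : ℝ) = (1 : ℝ≥0∞).toReal by simp]
        exact ENNReal.toReal_mono ENNReal.one_ne_top prob_le_one
      have h2 : 1 ≤ Real.exp (1 - t) := Real.one_le_exp (by linarith)
      linarith
    · push_neg at ht1
      set c : ℝ := t * Mr with hc
      have hcpos : 0 < c := by rw [hc]; positivity
      have hMrc : Mr < c := by rw [hc]; nlinarith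
      set X : ℕ := ⌈c⌉₊ with hX
      have hX1 : 1 ≤ X := by
        have := Nat.ceil_pos.mpr hcpos
        omega
      have hset : {k : ℕ | c ≤ (k : ℝ)} = Set.Ioi (X - 1) := by
        ext k
        simp only [Set.mem_setOf_eq, Set.mem_Ioi]
        rw [← Nat.ceil_le, ← hX]
        omega
      have hmeas : ρ {k : ℕ | c ≤ (k : ℝ)} = tl ρ (X - 1) := by rw [hset]; rfl
      have hMX : Mr ≤ (X : ℝ) := le_trans (le_of_lt hMrc) (Nat.le_ceil c)
      have h1 : τ (X - 1) ≤ Real.exp (1 - X / Mr) := upper_core X hX1 hMX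
      have h2 : Real.exp (1 - X / Mr) ≤ Real.exp (1 - t) := by
        apply Real.exp_le_exp.mpr
        have h3 : c ≤ (X : ℝ) := Nat.le_ceil c
        have h4 : t ≤ (X : ℝ) / Mr := by
          rw [le_div_iff₀ hMrpos]
          rw [hc] at h3
          linarith
        linarith
      calc (ρ {k : ℕ | c ≤ (k : ℝ)}).toReal = τ (X - 1) := by rw [hmeas]
        _ ≤ Real.exp (1 - t) := le_trans h1 h2
  · by_cases ht1 : 1 ≤ t
    · have h1 : (ρ {k : ℕ | (k : ℝ) ≤ t * Mr}).toReal ≤ 1 := by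
        rw [show (1 : ℝ) = (1 : ℝ≥0∞).toReal by simp]
        exact ENNReal.toReal_mono ENNReal.one_ne_top prob_le_one
      linarith
    · push_neg at ht1
      set j : ℕ := ⌊t * Mr⌋₊ with hj
      have hsub : {k : ℕ | (k : ℝ) ≤ t * Mr} ⊆ Set.Iic j := by
        intro k hk
        simp only [Set.mem_setOf_eq] at hk
        exact Nat.le_floor hk
      have hjle : (j : ℝ) ≤ t * Mr := Nat.floor_le (by positivity)
      have h2 : mn ρ ≤ (j : ℝ≥0∞) + mn ρ * tl ρ j := by
        calc mn ρ = gg ρ 0 := mn_eq_gg_zero ρ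
          _ ≤ (j : ℝ≥0∞) + gg ρ j := gg0_le_add ρ j
          _ ≤ _ := add_le_add le_rfl (hnb j)
      have h2fin : ((j : ℝ≥0∞) + mn ρ * tl ρ j) ≠ ⊤ :=
        ENNReal.add_ne_top.mpr
          ⟨ENNReal.natCast_ne_top j, ENNReal.mul_ne_top hMfin (htl_ne j)⟩
      have h3 : Mr ≤ (j : ℝ) + Mr * τ j := by
        have h4 := ENNReal.toReal_mono h2fin h2
        rwa [ENNReal.toReal_add (ENNReal.natCast_ne_top j)
          (ENNReal.mul_ne_top hMfin (htl_ne j)), ENNReal.toReal_natCast,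
          ENNReal.toReal_mul] at h4
      have hτj : 1 - t ≤ τ j := by
        have h5 : Mr ≤ t * Mr + Mr * τ j := by linarith
        nlinarith
      have h4 : ρ (Set.Iic j) = 1 - tl ρ j := by
        rw [show Set.Iic j = (Set.Ioi j)ᶜ by rw [Set.compl_Ioi]]
        exact prob_compl_eq_one_sub MeasurableSet.of_discrete
      have h5 : (ρ (Set.Iic j)).toReal = 1 - τ j := by
        rw [h4, ENNReal.toReal_sub_of_le (tl_le_one ρ j) ENNReal.one_ne_top]
        simp
        rfl
      calc (ρ {k : ℕ | (k : ℝ) ≤ t * Mr}).toReal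
          ≤ (ρ (Set.Iic j)).toReal :=
            ENNReal.toReal_mono (measure_ne_top ρ _) (measure_mono hsub)
        _ = 1 - τ j := h5
        _ ≤ t := by linarith

end GW13

/-- If the child distribution `Z₁` (supported on positive integers, finite mean `m`)
is NBUE, then every generation `Zₙ` is NBUE, and `P[Zₙ ≥ t mⁿ] ≤ e^{1-t}` and
`P[Zₙ ≤ t mⁿ] ≤ t` for all `t > 0`. -/
theorem stmt13 (ν : Measure ℕ) [IsProbabilityMeasure ν]
    (hν0 : ν {0} = 0) (hmean : (∑' j : ℕ, (j : ENNReal) * ν {j}) ≠ ⊤)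
    (hnbue : NBUE ν) :
    (∀ n : ℕ, NBUE (gwLaw ν n)) ∧
    (∀ n : ℕ, ∀ t : ℝ, 0 < t →
      (gwLaw ν n {k | t * ((∑' j : ℕ, (j : ENNReal) * ν {j}).toReal) ^ n ≤ (k : ℝ)}).toReal
        ≤ Real.exp (1 - t) ∧
      (gwLaw ν n {k | (k : ℝ) ≤ t * ((∑' j : ℕ, (j : ENNReal) * ν {j}).toReal) ^ n}).toReal
        ≤ t) := by
  have hmean' : GW13.mn ν ≠ ⊤ := hmean
  have hnb : ∀ k, GW13.gg ν k ≤ GW13.mn ν * GW13.tl ν k := (GW13.NBUE_iff ν).mp hnbue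
  have htl0 : GW13.tl ν 0 = 1 := by
    rw [GW13.tl, show Set.Ioi (0 : ℕ) = ({0} : Set ℕ)ᶜ by ext n; simp [Nat.pos_iff_ne_zero],
      prob_compl_eq_one_sub MeasurableSet.of_discrete, hν0, tsub_zero]
  have hm1 : 1 ≤ GW13.mn ν := by
    rw [GW13.mn_eq_gg_zero, GW13.gg_succ ν 0, htl0]
    exact le_add_right le_rfl
  have hmain := GW13.gw_main ν hν0 hnb
  constructor
  · intro n
    exact (GW13.NBUE_iff (gwLaw ν n)).mpr (hmain n).2
  · intro n t ht
    haveI := GW13.gw_prob ν n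
    have hMn : GW13.mn (gwLaw ν n) = (GW13.mn ν) ^ n := (hmain n).1
    have hMn1 : 1 ≤ GW13.mn (gwLaw ν n) := by
      rw [hMn]
      exact one_le_pow_of_one_le' hm1 n
    have hMnfin : GW13.mn (gwLaw ν n) ≠ ⊤ := by
      rw [hMn]
      exact ENNReal.pow_ne_top hmean'
    have hcast : ((∑' j : ℕ, (j : ENNReal) * ν {j}).toReal) ^ n
        = (GW13.mn (gwLaw ν n)).toReal := by
      rw [hMn, ENNReal.toReal_pow]
      rfl
    rw [hcast]
    exact GW13.concentration (gwLaw ν n) (hmain n).2 hMn1 hMnfin t ht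
end

section
/- Consider the generalized Pólya urn: start with b black and w white balls; at each step draw a ball, return it with another of the same color, and additionally insert black balls at arbitrary deterministic times so the total count Bₙ after n draws is a strictly increasing sequence with B₀ = b + w. Let qₙ(k) = P[Nₙ = k] where Nₙ is the number of white balls after n draws. Then for every n ≥ 0 and every k, qₙ(k)² ≥ qₙ(k−1)·qₙ(k+1); i.e., the distribution of Nₙ is log-concave in k. -/
set_option maxHeartbeats 1000000 in
/-- Log-concavity of the white-ball count in the generalized Pólya urn:
with `qₙ(k) = P[Nₙ = k]` satisfying the urn recurrence, `qₙ(k-1)·qₙ(k+1) ≤ qₙ(k)²`. -/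
theorem stmt17 (b w : ℕ) (hb : 1 ≤ b) (hw : 1 ≤ w) (B : ℕ → ℕ) (hB : StrictMono B)
    (hB0 : B 0 = b + w) (q : ℕ → ℤ → ℝ)
    (hq0 : ∀ k : ℤ, q 0 k = if k = (w : ℤ) then 1 else 0)
    (hrec : ∀ n : ℕ, ∀ k : ℤ,
      q (n + 1) k = ((k : ℝ) - 1) / (B n) * q n (k - 1) + (1 - (k : ℝ) / (B n)) * q n k) :
    ∀ n : ℕ, ∀ k : ℤ, q n (k - 1) * q n (k + 1) ≤ (q n k) ^ 2 := by
  -- B n grows at least linearly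
  have hBge : ∀ n : ℕ, b + w + n ≤ B n := by
    intro n
    induction n with
    | zero => omega
    | succ m ih =>
      have h2 : B m < B (m + 1) := hB (by omega)
      omega
  have hBpos : ∀ n : ℕ, (0:ℝ) < (B n : ℝ) := by
    intro n
    have : 0 < B n := by have := hBge n; omega
    exact_mod_cast this
  -- support lemma: q n is positive exactly on [w, w+n], zero elsewhere
  have supp : ∀ n : ℕ, ∀ k : ℤ,
      (((w:ℤ) ≤ k ∧ k ≤ (w:ℤ) + n) → 0 < q n k) ∧
      (¬((w:ℤ) ≤ k ∧ k ≤ (w:ℤ) + n) → q n k = 0) := by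
    intro n
    induction n with
    | zero =>
      intro k
      constructor
      · rintro ⟨h1, h2⟩
        have : k = (w:ℤ) := by push_cast at h2 ⊢; omega
        rw [hq0, if_pos this]; norm_num
      · intro h
        rw [hq0, if_neg]
        intro hk; exact h (by subst hk; push_cast; omega)
    | succ m ih =>
      intro k
      have nn : ∀ j : ℤ, 0 ≤ q m j := by
        intro j
        by_cases hj : ((w:ℤ) ≤ j ∧ j ≤ (w:ℤ) + m)
        · exact ((ih j).1 hj).le
        · rw [(ih j).2 hj]
      have hkB : ∀ j : ℤ, j ≤ (w:ℤ) + m → (j:ℝ) + 1 ≤ (B m : ℝ) := by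
        intro j hj
        have hz : j + 1 ≤ (B m : ℤ) := by
          have := hBge m
          have : ((b + w + m : ℕ) : ℤ) ≤ (B m : ℤ) := by exact_mod_cast this
          push_cast at this ⊢; omega
        exact_mod_cast hz
      constructor
      · rintro ⟨h1, h2⟩
        rw [hrec]
        push_cast at h2
        by_cases hc : k ≤ (w:ℤ) + m
        · -- second term positive, first nonneg
          have hq : 0 < q m k := (ih k).1 ⟨h1, hc⟩
          have hco : 0 < 1 - (k:ℝ) / (B m : ℝ) := by
            have := hkB k hc
            rw [sub_pos, div_lt_one (hBpos m)]
            linarith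
          have t1 : 0 ≤ ((k:ℝ) - 1) / (B m : ℝ) * q m (k - 1) := by
            apply mul_nonneg _ (nn _)
            apply div_nonneg _ (hBpos m).le
            have : (1:ℤ) ≤ k := by omega
            have : (1:ℝ) ≤ (k:ℝ) := by exact_mod_cast this
            linarith
          nlinarith [mul_pos hco hq]
        · -- k = w + m + 1 : first term positive, second zero
          have hk : k = (w:ℤ) + m + 1 := by omega
          have hq1 : 0 < q m (k - 1) := (ih (k-1)).1 ⟨by omega, by push_cast; omega⟩
          have hq2 : q m k = 0 := (ih k).2 (by push_cast; omega)
          have hco : 0 < ((k:ℝ) - 1) / (B m : ℝ) := by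
            apply div_pos _ (hBpos m)
            have : (2:ℤ) ≤ k := by omega
            have : (2:ℝ) ≤ (k:ℝ) := by exact_mod_cast this
            linarith
          rw [hq2]
          nlinarith [mul_pos hco hq1]
      · intro h
        rw [hrec]
        push_cast at h
        have h1 : q m (k - 1) = 0 := (ih (k-1)).2 (by push_cast; omega)
        have h2 : q m k = 0 := (ih k).2 (by push_cast; omega)
        rw [h1, h2]; ring
  have nn : ∀ n : ℕ, ∀ j : ℤ, 0 ≤ q n j := by
    intro n j
    by_cases hj : ((w:ℤ) ≤ j ∧ j ≤ (w:ℤ) + n)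
    · exact ((supp n j).1 hj).le
    · rw [(supp n j).2 hj]
  -- main induction
  intro n
  induction n with
  | zero =>
    intro k
    rw [hq0, hq0, hq0]
    split_ifs with h1 h2 h3 <;> try omega
    all_goals simp <;> positivity
  | succ m ih =>
    intro k
    by_cases hlo : k - 1 < (w:ℤ)
    · rw [(supp (m+1) (k-1)).2 (by push_cast; omega)]
      simp [sq_nonneg]
    by_cases hhi : (w:ℤ) + m + 1 < k + 1
    · rw [(supp (m+1) (k+1)).2 (by push_cast; omega)]
      simp [sq_nonneg]
    push_neg at hlo hhi
    -- now w + 1 ≤ k ≤ w + m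
    have hk1 : (w:ℤ) + 1 ≤ k := by omega
    have hk2 : k ≤ (w:ℤ) + m := by omega
    set Bn : ℝ := (B m : ℝ) with hBn
    have hBp : (0:ℝ) < Bn := hBpos m
    set a := q m (k - 2) with ha'
    set bb := q m (k - 1) with hbb'
    set c := q m k with hc'
    set d := q m (k + 1) with hd'
    have hbpos : 0 < bb := (supp m (k-1)).1 ⟨by omega, by push_cast; omega⟩
    have hcpos : 0 < c := (supp m k).1 ⟨by omega, by push_cast; omega⟩
    have hann : 0 ≤ a := nn m _
    have hdnn : 0 ≤ d := nn m _
    have hac : a * c ≤ bb ^ 2 := by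
      have := ih (k - 1)
      have e1 : k - 1 - 1 = k - 2 := by ring
      have e2 : k - 1 + 1 = k := by ring
      rwa [e1, e2] at this
    have hbd : bb * d ≤ c ^ 2 := ih k
    have had : a * d ≤ bb * c := by
      have h5 : a * d * (bb * c) ≤ (bb * c) * (bb * c) := by
        have e : a * d * (bb * c) = (a * c) * (bb * d) := by ring
        have h6 : (a * c) * (bb * d) ≤ bb ^ 2 * c ^ 2 :=
          mul_le_mul hac hbd (mul_nonneg hbpos.le hdnn) (sq_nonneg bb)
        rw [e]; nlinarith
      exact le_of_mul_le_mul_right (by linarith) (mul_pos hbpos hcpos)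
    -- bounds on coefficients
    have hx : (2:ℝ) ≤ (k:ℝ) := by
      have : (2:ℤ) ≤ k := by omega
      exact_mod_cast this
    have hy : (k:ℝ) + 1 ≤ Bn := by
      have hz : k + 1 ≤ (B m : ℤ) := by
        have := hBge m
        have h' : ((b + w + m : ℕ) : ℤ) ≤ (B m : ℤ) := by exact_mod_cast this
        push_cast at h'; omega
      rw [hBn]; exact_mod_cast hz
    have main : (((k:ℝ) - 2) * a + (Bn - (k:ℝ) + 1) * bb) * ((k:ℝ) * c + (Bn - (k:ℝ) - 1) * d)
        ≤ (((k:ℝ) - 1) * bb + (Bn - (k:ℝ)) * c) ^ 2 := by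
      nlinarith [mul_nonneg (mul_nonneg (by linarith : (0:ℝ) ≤ (k:ℝ) - 2) (by linarith : (0:ℝ) ≤ Bn - (k:ℝ) - 1)) (by linarith : (0:ℝ) ≤ bb * c - a * d),
        mul_nonneg (by nlinarith : (0:ℝ) ≤ ((k:ℝ) - 1)^2 - 1) (by linarith : (0:ℝ) ≤ bb^2 - a*c),
        mul_nonneg (by nlinarith : (0:ℝ) ≤ (Bn - (k:ℝ))^2 - 1) (by linarith : (0:ℝ) ≤ c^2 - bb*d),
        sq_nonneg (bb - c)]
    have hrw : ∀ (x y t : ℝ), (t - 1) / Bn * x + (1 - t / Bn) * y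
        = ((t - 1) * x + (Bn - t) * y) / Bn := by
      intro x y t
      field_simp
    have e1 : q (m+1) (k-1) = (((k:ℝ) - 2) * a + (Bn - (k:ℝ) + 1) * bb) / Bn := by
      rw [hrec]
      have e : k - 1 - 1 = k - 2 := by ring
      rw [e]
      push_cast
      rw [hrw]
      ring
    have e2 : q (m+1) k = (((k:ℝ) - 1) * bb + (Bn - (k:ℝ)) * c) / Bn := by
      rw [hrec, hrw]
    have e3 : q (m+1) (k+1) = ((k:ℝ) * c + (Bn - (k:ℝ) - 1) * d) / Bn := by
      rw [hrec]
      have e : k + 1 - 1 = k := by ring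
      rw [e]
      push_cast
      rw [hrw]
      ring
    rw [e1, e2, e3, div_mul_div_comm, div_pow,
      show Bn * Bn = Bn ^ 2 by ring]
    gcongr
end

section
/- In the generalized Pólya urn with white-ball count Nₙ and total count Bₙ (strictly increasing, B₀ = b+w), writing qₙ(k) = P[Nₙ = k], for all n ≥ 0 and all k: (Bₙ − k)·qₙ(k)² − (Bₙ − k − 1)·qₙ(k−1)·qₙ(k+1) − qₙ(k−1)·qₙ(k) ≥ 0. -/
set_option maxHeartbeats 2000000 in
/-- Auxiliary log-concavity variant for the generalized Pólya urn:
`(Bₙ - k)·qₙ(k)² - (Bₙ - k - 1)·qₙ(k-1)·qₙ(k+1) - qₙ(k-1)·qₙ(k) ≥ 0`. -/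
theorem stmt18 (b w : ℕ) (hb : 1 ≤ b) (hw : 1 ≤ w) (B : ℕ → ℕ) (hB : StrictMono B)
    (hB0 : B 0 = b + w) (q : ℕ → ℤ → ℝ)
    (hq0 : ∀ k : ℤ, q 0 k = if k = (w : ℤ) then 1 else 0)
    (hrec : ∀ n : ℕ, ∀ k : ℤ,
      q (n + 1) k = ((k : ℝ) - 1) / (B n) * q n (k - 1) + (1 - (k : ℝ) / (B n)) * q n k) :
    ∀ n : ℕ, ∀ k : ℤ,
      0 ≤ ((B n : ℝ) - k) * (q n k) ^ 2 - ((B n : ℝ) - k - 1) * q n (k - 1) * q n (k + 1)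
            - q n (k - 1) * q n k := by
  -- B n ≥ b + w + n
  have hBn : ∀ n : ℕ, b + w + n ≤ B n := by
    intro n
    induction n with
    | zero => omega
    | succ m ih => have h2 : B m < B (m+1) := hB (by omega); omega
  suffices main : ∀ n : ℕ,
      (∀ k : ℤ, ((w:ℤ) ≤ k ∧ k ≤ (w:ℤ) + n → 0 < q n k) ∧
        ((k < (w:ℤ) ∨ (w:ℤ) + n < k) → q n k = 0)) ∧
      (∀ k : ℤ, q n (k-1) * q n (k+1) ≤ (q n k)^2) ∧
      (∀ k : ℤ, 0 ≤ ((B n : ℝ) - k) * (q n k) ^ 2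
          - ((B n : ℝ) - k - 1) * q n (k - 1) * q n (k + 1) - q n (k - 1) * q n k) by
    intro n k; exact (main n).2.2 k
  intro n
  induction n with
  | zero =>
    have hwk : ∀ k : ℤ, ((w:ℤ) ≤ k ∧ k ≤ (w:ℤ) + 0 → 0 < q 0 k) ∧
        ((k < (w:ℤ) ∨ (w:ℤ) + 0 < k) → q 0 k = 0) := by
      intro k
      constructor
      · rintro ⟨h1, h2⟩
        have : k = (w:ℤ) := by omega
        rw [hq0, if_pos this]; norm_num
      · intro h
        have : k ≠ (w:ℤ) := by omega
        rw [hq0, if_neg this]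
    refine ⟨hwk, ?_, ?_⟩
    · intro k
      rw [hq0, hq0, hq0]
      by_cases h1 : k - 1 = (w:ℤ)
      · have h2 : k + 1 ≠ (w:ℤ) := by omega
        rw [if_pos h1, if_neg h2, mul_zero]; exact sq_nonneg _
      · rw [if_neg h1, zero_mul]; exact sq_nonneg _
    · intro k
      rw [hq0, hq0, hq0]
      by_cases h1 : k = (w:ℤ)
      · have h2 : k - 1 ≠ (w:ℤ) := by omega
        rw [if_pos h1, if_neg h2]
        have hBw : (w:ℝ) + 1 ≤ (B 0 : ℝ) := by
          have := hBn 0; exact_mod_cast by omega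
        have hk : (k:ℝ) = (w:ℝ) := by exact_mod_cast h1
        rw [hk]; ring_nf; nlinarith
      · rw [if_neg h1]
        by_cases h2 : k - 1 = (w:ℤ)
        · have h3 : k + 1 ≠ (w:ℤ) := by omega
          rw [if_pos h2, if_neg h3]; ring_nf; norm_num
        · rw [if_neg h2]; ring_nf; norm_num
  | succ n ih =>
    obtain ⟨hsupp, hlc, hH⟩ := ih
    have hBge : b + w + n ≤ B n := hBn n
    have hBpos : (0:ℝ) < (B n : ℝ) := by
      have : 0 < B n := by omega
      exact_mod_cast this
    have hBne : ((B n : ℝ)) ≠ 0 := ne_of_gt hBpos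
    have hBreal : (b : ℝ) + w + n ≤ (B n : ℝ) := by exact_mod_cast hBge
    have hb1 : (1:ℝ) ≤ (b:ℝ) := by exact_mod_cast hb
    have hw1 : (1:ℝ) ≤ (w:ℝ) := by exact_mod_cast hw
    have hqnn : ∀ k : ℤ, 0 ≤ q n k := by
      intro k
      by_cases h1 : (w:ℤ) ≤ k ∧ k ≤ (w:ℤ) + n
      · exact le_of_lt ((hsupp k).1 h1)
      · rw [(hsupp k).2 (by omega)]
    -- support for n+1
    have hsupp' : ∀ k : ℤ, ((w:ℤ) ≤ k ∧ k ≤ (w:ℤ) + (n+1) → 0 < q (n+1) k) ∧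
        ((k < (w:ℤ) ∨ (w:ℤ) + (n+1) < k) → q (n+1) k = 0) := by
      intro k
      have hr := hrec n k
      constructor
      · rintro ⟨h1, h2⟩
        have hk1 : (1:ℝ) ≤ (k:ℝ) := by exact_mod_cast (by omega : (1:ℤ) ≤ k)
        by_cases h3 : k ≤ (w:ℤ) + n
        · have hq2 : 0 < q n k := (hsupp k).1 ⟨h1, h3⟩
          have hkB : (k:ℝ) < (B n : ℝ) := by
            have : (k:ℝ) ≤ (w:ℝ) + n := by exact_mod_cast h3
            push_cast at hBreal ⊢
            linarith
          have hcoef : 0 < 1 - (k:ℝ)/(B n : ℝ) := by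
            rw [sub_pos, div_lt_one hBpos]; exact hkB
          have ht1 : 0 ≤ ((k:ℝ)-1)/(B n : ℝ) * q n (k-1) :=
            mul_nonneg (div_nonneg (by linarith) hBpos.le) (hqnn _)
          rw [hr]
          nlinarith [mul_pos hcoef hq2]
        · have hq1 : 0 < q n (k-1) := (hsupp _).1 ⟨by omega, by omega⟩
          have hq2 : q n k = 0 := (hsupp _).2 (by omega)
          have hco : 0 < ((k:ℝ)-1)/(B n : ℝ) := by
            apply div_pos ?_ hBpos
            have : (2:ℝ) ≤ (k:ℝ) := by exact_mod_cast (by omega : (2:ℤ) ≤ k)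
            linarith
          rw [hr, hq2, mul_zero, add_zero]
          exact mul_pos hco hq1
      · intro h
        have h1 : q n (k-1) = 0 := (hsupp _).2 (by omega)
        have h2 : q n k = 0 := (hsupp _).2 (by omega)
        rw [hr, h1, h2]; ring
    -- log-concavity for n+1
    have hlc' : ∀ k : ℤ, q (n+1) (k-1) * q (n+1) (k+1) ≤ (q (n+1) k)^2 := by
      intro k
      by_cases hm : q (n+1) (k-1) = 0
      · rw [hm, zero_mul]; exact sq_nonneg _
      by_cases hp : q (n+1) (k+1) = 0
      · rw [hp, mul_zero]; exact sq_nonneg _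
      have hmr : (w:ℤ) ≤ k-1 ∧ k-1 ≤ (w:ℤ) + (n+1) := by
        by_contra hcon; exact hm ((hsupp' _).2 (by omega))
      have hpr : (w:ℤ) ≤ k+1 ∧ k+1 ≤ (w:ℤ) + (n+1) := by
        by_contra hcon; exact hp ((hsupp' _).2 (by omega))
      have ha : 0 ≤ q n (k - 2) := hqnn _
      have hc : 0 ≤ q n (k - 1) := hqnn _
      have hd : 0 ≤ q n k := hqnn _
      have he : 0 ≤ q n (k + 1) := hqnn _
      have hLC1 : 0 ≤ q n k ^ 2 - q n (k - 1) * q n (k + 1) := by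
        have := hlc k; linarith
      have hLC2 : 0 ≤ q n (k - 1) ^ 2 - q n (k - 2) * q n k := by
        have h0 := hlc (k-1)
        rw [show k-1-1 = k-2 from by ring, show k-1+1 = k from by ring] at h0
        linarith
      have hLC3 : 0 ≤ q n (k - 1) * q n k - q n (k - 2) * q n (k + 1) := by
        rcases eq_or_lt_of_le ha with h|h
        · rw [← h]; simp [mul_nonneg hc hd]
        rcases eq_or_lt_of_le he with h'|h'
        · rw [← h']; simp [mul_nonneg hc hd]
        have hka : (w:ℤ) ≤ k-2 ∧ k-2 ≤ (w:ℤ)+n := by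
          by_contra hcon
          exact absurd ((hsupp _).2 (by omega)) (ne_of_gt h)
        have hke : (w:ℤ) ≤ k+1 ∧ k+1 ≤ (w:ℤ)+n := by
          by_contra hcon
          exact absurd ((hsupp _).2 (by omega)) (ne_of_gt h')
        have hc' : 0 < q n (k - 1) := (hsupp _).1 ⟨by omega, by omega⟩
        have hd' : 0 < q n k := (hsupp _).1 ⟨by omega, by omega⟩
        have t1 : q n (k - 2) * q n k ≤ q n (k - 1) ^ 2 := by linarith
        have t2 : q n (k - 1) * q n (k + 1) ≤ q n k ^ 2 := by linarith
        nlinarith [mul_pos hc' hd', mul_le_mul t1 t2 (mul_nonneg hc he) (sq_nonneg _)]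
      have hk2 : (2:ℝ) ≤ (k:ℝ) := by exact_mod_cast (by omega : (2:ℤ) ≤ k)
      have hx1 : (k:ℝ) + 1 ≤ (B n : ℝ) := by
        have h0 : (k:ℤ) + 1 ≤ (b:ℤ) + w + n := by omega
        have h1 : (k:ℝ) + 1 ≤ (b:ℝ) + w + n := by exact_mod_cast h0
        linarith
      have hexp2 : (q (n+1) k)^2 - q (n+1) (k-1) * q (n+1) (k+1) = ((q n (k - 1) - q n k) ^ 2 + ((k : ℝ)) * (((k : ℝ)) - 2) * (q n (k - 1) ^ 2 - q n (k - 2) * q n k) + (((k : ℝ)) - 2) * ((((B n : ℝ)) - ((k : ℝ))) - 1) * (q n (k - 1) * q n k - q n (k - 2) * q n (k + 1)) + ((((B n : ℝ)) - ((k : ℝ))) ^ 2 - 1) * (q n k ^ 2 - q n (k - 1) * q n (k + 1))) / ((B n : ℝ))^2 := by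
        rw [hrec n k, hrec n (k-1), hrec n (k+1),
          show k-1-1 = k-2 from by ring, show k+1-1 = k from by ring]
        push_cast
        field_simp
        ring
      have hcert : 0 ≤ ((q n (k - 1) - q n k) ^ 2 + ((k : ℝ)) * (((k : ℝ)) - 2) * (q n (k - 1) ^ 2 - q n (k - 2) * q n k) + (((k : ℝ)) - 2) * ((((B n : ℝ)) - ((k : ℝ))) - 1) * (q n (k - 1) * q n k - q n (k - 2) * q n (k + 1)) + ((((B n : ℝ)) - ((k : ℝ))) ^ 2 - 1) * (q n k ^ 2 - q n (k - 1) * q n (k + 1))) := by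
        nlinarith [sq_nonneg (q n (k - 1) - q n k), mul_nonneg (mul_nonneg (by linarith : (0:ℝ) ≤ (k:ℝ)) (by linarith : (0:ℝ) ≤ (k:ℝ) - 2)) hLC2,
          mul_nonneg (mul_nonneg (by linarith : (0:ℝ) ≤ (k:ℝ) - 2) (by linarith : (0:ℝ) ≤ (((B n : ℝ)) - ((k : ℝ))) - 1)) hLC3,
          mul_nonneg (by nlinarith : (0:ℝ) ≤ (((B n : ℝ)) - ((k : ℝ))) ^ 2 - 1) hLC1]
      rw [← sub_nonneg, hexp2]
      exact div_nonneg hcert (by positivity)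
    refine ⟨hsupp', hlc', ?_⟩
    intro k
    have hB1 : (B n : ℝ) + 1 ≤ (B (n+1) : ℝ) := by
      have : B n + 1 ≤ B (n+1) := hB (Nat.lt_succ_self n)
      exact_mod_cast this
    -- the key inequality with B' = B n + 1
    have hTT : 0 ≤ ((((B n : ℝ)) + 1 - ((k : ℝ))) * ((((k : ℝ)) - 1) * q n (k - 1) + (((B n : ℝ)) - ((k : ℝ))) * q n k) ^ 2 - (((B n : ℝ)) - ((k : ℝ))) * ((((k : ℝ)) - 2) * q n (k - 2) + ((((B n : ℝ)) - ((k : ℝ))) + 1) * q n (k - 1)) * (((k : ℝ)) * q n k + ((((B n : ℝ)) - ((k : ℝ))) - 1) * q n (k + 1)) - ((((k : ℝ)) - 2) * q n (k - 2) + ((((B n : ℝ)) - ((k : ℝ))) + 1) * q n (k - 1)) * ((((k : ℝ)) - 1) * q n (k - 1) + (((B n : ℝ)) - ((k : ℝ))) * q n k)) := by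
      by_cases hc0 : q n (k - 1) = 0
      · by_cases hd0 : q n k = 0
        · have hae : q n (k - 2) = 0 ∨ q n (k + 1) = 0 := by
            by_contra hcon
            push_neg at hcon
            have ha' : (w:ℤ) ≤ k-2 ∧ k-2 ≤ (w:ℤ)+n := by
              by_contra hh; exact hcon.1 ((hsupp _).2 (by omega))
            have he' : (w:ℤ) ≤ k+1 ∧ k+1 ≤ (w:ℤ)+n := by
              by_contra hh; exact hcon.2 ((hsupp _).2 (by omega))
            exact absurd hc0 (ne_of_gt ((hsupp (k-1)).1 ⟨by omega, by omega⟩))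
          rcases hae with h|h <;> rw [hc0, hd0, h] <;> simp
        · have hd' : (w:ℤ) ≤ k ∧ k ≤ (w:ℤ)+n := by
            by_contra hh; exact hd0 ((hsupp _).2 (by omega))
          have hkw : k = (w:ℤ) := by
            by_contra hh
            exact absurd hc0 (ne_of_gt ((hsupp (k-1)).1 ⟨by omega, by omega⟩))
          have ha0 : q n (k - 2) = 0 := (hsupp _).2 (by omega)
          have hkB : (k:ℝ) + 1 ≤ (B n : ℝ) := by
            have h0 : (k:ℤ) + 1 ≤ (b:ℤ) + w + n := by omega
            have h1 : (k:ℝ) + 1 ≤ (b:ℝ) + w + n := by exact_mod_cast h0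
            linarith
          rw [hc0, ha0]
          nlinarith [mul_nonneg (show (0:ℝ) ≤ (B n : ℝ) + 1 - (k:ℝ) by linarith)
            (sq_nonneg ((((B n : ℝ)) - ((k : ℝ))) * q n k))]
      · have hc' : 0 < q n (k - 1) := lt_of_le_of_ne (hqnn _) (Ne.symm hc0)
        have hcr : (w:ℤ) ≤ k-1 ∧ k-1 ≤ (w:ℤ)+n := by
          by_contra hh; exact hc0 ((hsupp _).2 (by omega))
        have hk2 : (2:ℝ) ≤ (k:ℝ) := by exact_mod_cast (by omega : (2:ℤ) ≤ k)
        have hxk : (k:ℝ) ≤ (B n : ℝ) := by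
          have h0 : (k:ℤ) ≤ (b:ℤ) + w + n := by omega
          have h1 : (k:ℝ) ≤ (b:ℝ) + w + n := by exact_mod_cast h0
          linarith
        have ha : 0 ≤ q n (k - 2) := hqnn _
        have hd : 0 ≤ q n k := hqnn _
        have H1 : 0 ≤ ((((B n : ℝ)) - ((k : ℝ))) * q n k ^ 2 - ((((B n : ℝ)) - ((k : ℝ))) - 1) * q n (k - 1) * q n (k + 1) - q n (k - 1) * q n k) := by
          have := hH k; linarith
        have H2 : 0 ≤ (((((B n : ℝ)) - ((k : ℝ))) + 1) * q n (k - 1) ^ 2 - (((B n : ℝ)) - ((k : ℝ))) * q n (k - 2) * q n k - q n (k - 2) * q n (k - 1)) := by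
          have h0 := hH (k-1)
          rw [show k-1-1 = k-2 from by ring, show k-1+1 = k from by ring] at h0
          push_cast at h0
          linarith
        have cert : q n (k - 1) * ((((B n : ℝ)) + 1 - ((k : ℝ))) * ((((k : ℝ)) - 1) * q n (k - 1) + (((B n : ℝ)) - ((k : ℝ))) * q n k) ^ 2 - (((B n : ℝ)) - ((k : ℝ))) * ((((k : ℝ)) - 2) * q n (k - 2) + ((((B n : ℝ)) - ((k : ℝ))) + 1) * q n (k - 1)) * (((k : ℝ)) * q n k + ((((B n : ℝ)) - ((k : ℝ))) - 1) * q n (k + 1)) - ((((k : ℝ)) - 2) * q n (k - 2) + ((((B n : ℝ)) - ((k : ℝ))) + 1) * q n (k - 1)) * ((((k : ℝ)) - 1) * q n (k - 1) + (((B n : ℝ)) - ((k : ℝ))) * q n k)) = (q n (k - 1) * (((B n : ℝ)) - ((k : ℝ))) * ((((B n : ℝ)) - ((k : ℝ))) + 1) + (((B n : ℝ)) - ((k : ℝ))) * (((k : ℝ)) - 2) * q n (k - 2)) * ((((B n : ℝ)) - ((k : ℝ))) * q n k ^ 2 - ((((B n : ℝ)) - ((k : ℝ))) - 1) * q n (k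 - 1) * q n (k + 1) - q n (k - 1) * q n k) + (q n (k - 1) * (((k : ℝ)) - 1) * (((k : ℝ)) - 2) + (((B n : ℝ)) - ((k : ℝ))) * (((k : ℝ)) - 2) * q n k) * (((((B n : ℝ)) - ((k : ℝ))) + 1) * q n (k - 1) ^ 2 - (((B n : ℝ)) - ((k : ℝ))) * q n (k - 2) * q n k - q n (k - 2) * q n (k - 1)) := by ring
        have hM1 : 0 ≤ (q n (k - 1) * (((B n : ℝ)) - ((k : ℝ))) * ((((B n : ℝ)) - ((k : ℝ))) + 1) + (((B n : ℝ)) - ((k : ℝ))) * (((k : ℝ)) - 2) * q n (k - 2)) := by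
          have hx0 : (0:ℝ) ≤ (((B n : ℝ)) - ((k : ℝ))) := by linarith
          have := mul_nonneg (mul_nonneg hx0 (by linarith : (0:ℝ) ≤ (k:ℝ) - 2)) ha
          nlinarith [mul_nonneg (mul_nonneg hc'.le hx0) (by linarith : (0:ℝ) ≤ (((B n : ℝ)) - ((k : ℝ))) + 1)]
        have hM2 : 0 ≤ (q n (k - 1) * (((k : ℝ)) - 1) * (((k : ℝ)) - 2) + (((B n : ℝ)) - ((k : ℝ))) * (((k : ℝ)) - 2) * q n k) := by
          have hx0 : (0:ℝ) ≤ (((B n : ℝ)) - ((k : ℝ))) := by linarith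
          nlinarith [mul_nonneg (mul_nonneg hc'.le (by linarith : (0:ℝ) ≤ (k:ℝ) - 1)) (by linarith : (0:ℝ) ≤ (k:ℝ) - 2),
            mul_nonneg (mul_nonneg hx0 (by linarith : (0:ℝ) ≤ (k:ℝ) - 2)) hd]
        have hcTT : 0 ≤ q n (k - 1) * ((((B n : ℝ)) + 1 - ((k : ℝ))) * ((((k : ℝ)) - 1) * q n (k - 1) + (((B n : ℝ)) - ((k : ℝ))) * q n k) ^ 2 - (((B n : ℝ)) - ((k : ℝ))) * ((((k : ℝ)) - 2) * q n (k - 2) + ((((B n : ℝ)) - ((k : ℝ))) + 1) * q n (k - 1)) * (((k : ℝ)) * q n k + ((((B n : ℝ)) - ((k : ℝ))) - 1) * q n (k + 1)) - ((((k : ℝ)) - 2) * q n (k - 2) + ((((B n : ℝ)) - ((k : ℝ))) + 1) * q n (k - 1)) * ((((k : ℝ)) - 1) * q n (k - 1) + (((B n : ℝ)) - ((k : ℝ))) * q n k)) := by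
          rw [cert]
          exact add_nonneg (mul_nonneg hM1 H1) (mul_nonneg hM2 H2)
        nlinarith [hcTT, hc']
    have hexp : ((B n : ℝ) + 1 - (k:ℝ)) * (q (n+1) k)^2 - ((B n : ℝ) - (k:ℝ)) * q (n+1) (k-1) * q (n+1) (k+1) - q (n+1) (k-1) * q (n+1) k = ((((B n : ℝ)) + 1 - ((k : ℝ))) * ((((k : ℝ)) - 1) * q n (k - 1) + (((B n : ℝ)) - ((k : ℝ))) * q n k) ^ 2 - (((B n : ℝ)) - ((k : ℝ))) * ((((k : ℝ)) - 2) * q n (k - 2) + ((((B n : ℝ)) - ((k : ℝ))) + 1) * q n (k - 1)) * (((k : ℝ)) * q n k + ((((B n : ℝ)) - ((k : ℝ))) - 1) * q n (k + 1)) - ((((k : ℝ)) - 2) * q n (k - 2) + ((((B n : ℝ)) - ((k : ℝ))) + 1) * q n (k - 1)) * ((((k : ℝ)) - 1) * q n (k - 1) + (((B n : ℝ)) - ((k : ℝ))) * q n k)) / ((B n : ℝ))^2 := by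
      rw [hrec n k, hrec n (k-1), hrec n (k+1),
        show k-1-1 = k-2 from by ring, show k+1-1 = k from by ring]
      push_cast
      field_simp
      ring
    have hE1 : 0 ≤ ((B n : ℝ) + 1 - (k:ℝ)) * (q (n+1) k)^2 - ((B n : ℝ) - (k:ℝ)) * q (n+1) (k-1) * q (n+1) (k+1) - q (n+1) (k-1) * q (n+1) k := by
      rw [hexp]; exact div_nonneg hTT (by positivity)
    have hLCk : 0 ≤ (q (n+1) k)^2 - q (n+1) (k-1) * q (n+1) (k+1) := by
      have := hlc' k; linarith
    nlinarith [hE1, mul_nonneg (show (0:ℝ) ≤ (B (n+1) : ℝ) - (B n : ℝ) - 1 by linarith) hLCk]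
end

section
/- In the generalized Pólya urn with qₙ(k) = P[Nₙ = k], for all n, k ≥ 0: qₙ(k−1)·q_{n+1}(k+1) ≤ qₙ(k)·q_{n+1}(k). -/
private lemma urn_nonneg_of_mul {x y : ℝ} (hx : 0 < x) (h : 0 ≤ x * y) : 0 ≤ y :=
  le_of_not_gt fun hy => absurd h (not_le.mpr (mul_neg_of_pos_of_neg hx hy))

private lemma urn_S1 (a b c d β k : ℝ) (ha : 0 ≤ a) (hb : 0 ≤ b) (hc : 0 ≤ c) (hd : 0 ≤ d)
    (hpat : b = 0 → c = 0 → a * d = 0)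
    (hbk : b ≠ 0 → 2 ≤ k) (hck : c ≠ 0 → k + 1 ≤ β)
    (Lb : a * c ≤ b ^ 2) (Lc : b * d ≤ c ^ 2)
    (H2 : 0 ≤ (β - k) * c ^ 2 - (β - k - 1) * (b * d) - b * c) :
    ((k - 2) * a + (β - k + 1) * b) * (k * c + (β - k - 1) * d)
      ≤ ((k - 1) * b + (β - k) * c) ^ 2 := by
  rcases eq_or_ne b 0 with hb0 | hb0
  · rcases eq_or_ne c 0 with hc0 | hc0
    · have had := hpat hb0 hc0
      subst hb0; subst hc0
      calc ((k - 2) * a + (β - k + 1) * 0) * (k * 0 + (β - k - 1) * d)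
          = (k - 2) * (β - k - 1) * (a * d) := by ring
        _ = 0 := by rw [had]; ring
        _ ≤ _ := sq_nonneg _
    · have hc' : 0 < c := lt_of_le_of_ne hc (Ne.symm hc0)
      have hac : a * c = 0 := le_antisymm (by nlinarith) (mul_nonneg ha hc)
      have ha0 : a = 0 := by
        rcases mul_eq_zero.mp hac with h | h
        · exact h
        · exact absurd h hc0
      subst hb0; subst ha0
      calc ((k - 2) * 0 + (β - k + 1) * 0) * (k * c + (β - k - 1) * d) = 0 := by ring
        _ ≤ _ := sq_nonneg _
  · rcases eq_or_ne c 0 with hc0 | hc0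
    · have hb' : 0 < b := lt_of_le_of_ne hb (Ne.symm hb0)
      have hbd : b * d = 0 := le_antisymm (by nlinarith) (mul_nonneg hb hd)
      have hd0 : d = 0 := by
        rcases mul_eq_zero.mp hbd with h | h
        · exact absurd h hb0
        · exact h
      subst hc0; subst hd0
      calc ((k - 2) * a + (β - k + 1) * b) * (k * 0 + (β - k - 1) * 0) = 0 := by ring
        _ ≤ _ := sq_nonneg _
    · have hb' : 0 < b := lt_of_le_of_ne hb (Ne.symm hb0)
      have hc' : 0 < c := lt_of_le_of_ne hc (Ne.symm hc0)
      have hk : 2 ≤ k := hbk hb0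
      have hkβ : k + 1 ≤ β := hck hc0
      have had : a * d ≤ b * c := by
        have hm : (a * c) * (b * d) ≤ b ^ 2 * c ^ 2 := by
          nlinarith [Lb, Lc, mul_nonneg hb hd, sq_nonneg b]
        nlinarith [hm, mul_pos hb' hc']
      nlinarith [mul_nonneg (mul_nonneg (by linarith : (0:ℝ) ≤ k) (by linarith : (0:ℝ) ≤ k - 2))
          (by linarith : (0:ℝ) ≤ b ^ 2 - a * c),
        mul_nonneg (mul_nonneg (by linarith : (0:ℝ) ≤ β - k - 1)
          (by linarith : (0:ℝ) ≤ β - k + 1)) (by linarith : (0:ℝ) ≤ c ^ 2 - b * d),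
        mul_nonneg (mul_nonneg (by linarith : (0:ℝ) ≤ k - 2)
          (by linarith : (0:ℝ) ≤ β - k - 1)) (by linarith : (0:ℝ) ≤ b * c - a * d),
        sq_nonneg (b - c)]

private lemma urn_G (a b c d β k : ℝ) (ha : 0 ≤ a) (hb : 0 ≤ b) (hc : 0 ≤ c) (hd : 0 ≤ d)
    (hpat : b = 0 → c = 0 → a * d = 0)
    (hbk : b ≠ 0 → 2 ≤ k) (hck : c ≠ 0 → k + 1 ≤ β)
    (Lb : a * c ≤ b ^ 2) (Lc : b * d ≤ c ^ 2)
    (H1 : 0 ≤ (β - k + 1) * b ^ 2 - (β - k) * (a * c) - a * b)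
    (H2 : 0 ≤ (β - k) * c ^ 2 - (β - k - 1) * (b * d) - b * c) :
    0 ≤ (β - k + 1) * ((k - 1) * b + (β - k) * c) ^ 2
      - (β - k) * (((k - 2) * a + (β - k + 1) * b) * (k * c + (β - k - 1) * d))
      - ((k - 2) * a + (β - k + 1) * b) * ((k - 1) * b + (β - k) * c) := by
  rcases eq_or_ne b 0 with hb0 | hb0
  · rcases eq_or_ne c 0 with hc0 | hc0
    · have had := hpat hb0 hc0
      subst hb0; subst hc0
      have hE : (β - k + 1) * ((k - 1) * 0 + (β - k) * 0) ^ 2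
          - (β - k) * (((k - 2) * a + (β - k + 1) * 0) * (k * 0 + (β - k - 1) * d))
          - ((k - 2) * a + (β - k + 1) * 0) * ((k - 1) * 0 + (β - k) * 0)
          = -((β - k) * (k - 2) * (β - k - 1)) * (a * d) := by ring
      rw [hE, had, mul_zero]
    · have hc' : 0 < c := lt_of_le_of_ne hc (Ne.symm hc0)
      have hac : a * c = 0 := le_antisymm (by nlinarith) (mul_nonneg ha hc)
      have ha0 : a = 0 := by
        rcases mul_eq_zero.mp hac with h | h
        · exact h
        · exact absurd h hc0
      subst hb0; subst ha0
      have hE : (β - k + 1) * ((k - 1) * 0 + (β - k) * c) ^ 2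
          - (β - k) * (((k - 2) * 0 + (β - k + 1) * 0) * (k * c + (β - k - 1) * d))
          - ((k - 2) * 0 + (β - k + 1) * 0) * ((k - 1) * 0 + (β - k) * c)
          = (β - k + 1) * ((β - k) * c) ^ 2 := by ring
      rw [hE]
      exact mul_nonneg (by linarith [hck hc0]) (sq_nonneg _)
  · rcases eq_or_ne c 0 with hc0 | hc0
    · have hb' : 0 < b := lt_of_le_of_ne hb (Ne.symm hb0)
      have hbd : b * d = 0 := le_antisymm (by nlinarith) (mul_nonneg hb hd)
      have hd0 : d = 0 := by
        rcases mul_eq_zero.mp hbd with h | h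
        · exact absurd h hb0
        · exact h
      subst hc0; subst hd0
      have hk : 2 ≤ k := hbk hb0
      have hE : (β - k + 1) * ((k - 1) * b + (β - k) * 0) ^ 2
          - (β - k) * (((k - 2) * a + (β - k + 1) * b) * (k * 0 + (β - k - 1) * 0))
          - ((k - 2) * a + (β - k + 1) * b) * ((k - 1) * b + (β - k) * 0)
          = ((k - 1) * (k - 2)) * ((β - k + 1) * b ^ 2 - a * b) := by ring
      rw [hE]
      apply mul_nonneg (by nlinarith)
      nlinarith [H1]
    · have hb' : 0 < b := lt_of_le_of_ne hb (Ne.symm hb0)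
      have hk : 2 ≤ k := hbk hb0
      have hkβ : k + 1 ≤ β := hck hc0
      have m1 : 0 ≤ (k - 2) * (k - 1) * b + (k - 2) * (β - k) * c :=
        add_nonneg (mul_nonneg (mul_nonneg (by linarith) (by linarith)) hb)
          (mul_nonneg (mul_nonneg (by linarith) (by linarith)) hc)
      have m2 : 0 ≤ (β - k) * (β - k + 1) * b + (k - 2) * (β - k) * a :=
        add_nonneg (mul_nonneg (mul_nonneg (by linarith) (by linarith)) hb)
          (mul_nonneg (mul_nonneg (by linarith) (by linarith)) ha)
      have key : 0 ≤ b * ((β - k + 1) * ((k - 1) * b + (β - k) * c) ^ 2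
          - (β - k) * (((k - 2) * a + (β - k + 1) * b) * (k * c + (β - k - 1) * d))
          - ((k - 2) * a + (β - k + 1) * b) * ((k - 1) * b + (β - k) * c)) := by
        nlinarith [mul_nonneg m1 H1, mul_nonneg m2 H2]
      exact urn_nonneg_of_mul hb' key

private lemma urn_F (a b c d β k M : ℝ) (ha : 0 ≤ a) (hb : 0 ≤ b) (hc : 0 ≤ c) (hd : 0 ≤ d)
    (hpat : b = 0 → c = 0 → a * d = 0)
    (hbk : b ≠ 0 → 2 ≤ k) (hck : c ≠ 0 → k + 1 ≤ β)
    (Lb : a * c ≤ b ^ 2) (Lc : b * d ≤ c ^ 2)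
    (H1 : 0 ≤ (β - k + 1) * b ^ 2 - (β - k) * (a * c) - a * b)
    (H2 : 0 ≤ (β - k) * c ^ 2 - (β - k - 1) * (b * d) - b * c)
    (hM : β + 1 ≤ M) :
    0 ≤ (M - k) * ((k - 1) * b + (β - k) * c) ^ 2
      - (M - k - 1) * (((k - 2) * a + (β - k + 1) * b) * (k * c + (β - k - 1) * d))
      - ((k - 2) * a + (β - k + 1) * b) * ((k - 1) * b + (β - k) * c) := by
  have hS1 := urn_S1 a b c d β k ha hb hc hd hpat hbk hck Lb Lc H2
  have hG := urn_G a b c d β k ha hb hc hd hpat hbk hck Lb Lc H1 H2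
  nlinarith [hG, mul_nonneg (by linarith : (0:ℝ) ≤ M - β - 1) (by linarith :
    (0:ℝ) ≤ ((k - 1) * b + (β - k) * c) ^ 2
      - ((k - 2) * a + (β - k + 1) * b) * (k * c + (β - k - 1) * d))]

/-- Cross-step log-concavity variant for the generalized Pólya urn:
for all `n, k ≥ 0`, `qₙ(k-1)·q_{n+1}(k+1) ≤ qₙ(k)·q_{n+1}(k)`. -/
theorem stmt19 (b w : ℕ) (hb : 1 ≤ b) (hw : 1 ≤ w) (B : ℕ → ℕ) (hB : StrictMono B)
    (hB0 : B 0 = b + w) (q : ℕ → ℤ → ℝ)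
    (hq0 : ∀ k : ℤ, q 0 k = if k = (w : ℤ) then 1 else 0)
    (hrec : ∀ n : ℕ, ∀ k : ℤ,
      q (n + 1) k = ((k : ℝ) - 1) / (B n) * q n (k - 1) + (1 - (k : ℝ) / (B n)) * q n k) :
    ∀ n : ℕ, ∀ k : ℤ, 0 ≤ k →
      q n (k - 1) * q (n + 1) (k + 1) ≤ q n k * q (n + 1) k := by
  -- basic bounds on B
  have hBn : ∀ n : ℕ, b + w + n ≤ B n := by
    intro n
    induction n with
    | zero => omega
    | succ n ih => have := hB (show n < n + 1 by omega); omega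
  have hBpos : ∀ n : ℕ, (0:ℝ) < (B n : ℝ) := by
    intro n
    have := hBn n
    exact_mod_cast (by omega : 0 < B n)
  -- support of q
  have qlow : ∀ n : ℕ, ∀ k : ℤ, k < (w:ℤ) → q n k = 0 := by
    intro n
    induction n with
    | zero => intro k hk; rw [hq0]; exact if_neg (by omega)
    | succ n ih =>
      intro k hk
      rw [hrec n k, ih (k - 1) (by omega), ih k hk]
      ring
  have qhigh : ∀ n : ℕ, ∀ k : ℤ, (w:ℤ) + n < k → q n k = 0 := by
    intro n
    induction n with
    | zero => intro k hk; rw [hq0]; exact if_neg (by omega)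
    | succ n ih =>
      intro k hk
      rw [hrec n k, ih (k - 1) (by omega), ih k (by omega)]
      ring
  -- nonnegativity
  have qnonneg : ∀ n : ℕ, ∀ k : ℤ, 0 ≤ q n k := by
    intro n
    induction n with
    | zero =>
      intro k; rw [hq0]; split <;> norm_num
    | succ n ih =>
      intro k
      rw [hrec n k]
      rcases lt_or_ge k (w:ℤ) with h | h
      · rw [qlow n (k - 1) (by omega), qlow n k h]; norm_num
      · have h1 : 0 ≤ ((k:ℝ) - 1) / (B n) * q n (k - 1) := by
          apply mul_nonneg (div_nonneg _ (hBpos n).le) (ih (k - 1))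
          have : (1:ℝ) ≤ (k:ℝ) := by exact_mod_cast (by omega : (1:ℤ) ≤ k)
          linarith
        have h2 : 0 ≤ (1 - (k:ℝ) / (B n)) * q n k := by
          rcases le_or_gt k ((w:ℤ) + n) with h' | h'
          · apply mul_nonneg _ (ih k)
            have hkB : (k:ℝ) ≤ (B n : ℝ) := by
              have h3 := hBn n
              exact_mod_cast (by omega : (k:ℤ) ≤ (B n : ℤ))
            rw [sub_nonneg, div_le_one (hBpos n)]
            exact hkB
          · rw [qhigh n k h', mul_zero]
        linarith
  -- positivity on the support
  have qpos : ∀ n : ℕ, ∀ k : ℤ, (w:ℤ) ≤ k → k ≤ (w:ℤ) + n → 0 < q n k := by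
    intro n
    induction n with
    | zero =>
      intro k hk1 hk2
      have hkw : k = (w:ℤ) := by omega
      rw [hq0, if_pos hkw]; norm_num
    | succ n ih =>
      intro k hk1 hk2
      rw [hrec n k]
      rcases le_or_gt k ((w:ℤ) + n) with h | h
      · have hq := ih k hk1 h
        have hco : 0 < 1 - (k:ℝ) / (B n) := by
          have h3 := hBn n
          have : (k:ℝ) < (B n : ℝ) := by exact_mod_cast (by omega : (k:ℤ) < (B n : ℤ))
          have := (div_lt_one (hBpos n)).mpr this
          linarith
        have t1 : 0 ≤ ((k:ℝ) - 1) / (B n) * q n (k - 1) := by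
          apply mul_nonneg (div_nonneg _ (hBpos n).le) (qnonneg n (k - 1))
          have : (1:ℝ) ≤ (k:ℝ) := by exact_mod_cast (by omega : (1:ℤ) ≤ k)
          linarith
        nlinarith [mul_pos hco hq]
      · have hkval : k = (w:ℤ) + n + 1 := by omega
        have hq : 0 < q n (k - 1) := ih (k - 1) (by omega) (by omega)
        have t1 : 0 < ((k:ℝ) - 1) / (B n) * q n (k - 1) := by
          apply mul_pos (div_pos _ (hBpos n)) hq
          have : (2:ℝ) ≤ (k:ℝ) := by exact_mod_cast (by omega : (2:ℤ) ≤ k)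
          linarith
        have t2 : 0 ≤ (1 - (k:ℝ) / (B n)) * q n k := by
          apply mul_nonneg _ (qnonneg n k)
          have h3 := hBn n
          have : (k:ℝ) ≤ (B n : ℝ) := by exact_mod_cast (by omega : (k:ℤ) ≤ (B n : ℤ))
          rw [sub_nonneg, div_le_one (hBpos n)]
          exact this
        linarith
  have qne_low : ∀ n : ℕ, ∀ j : ℤ, q n j ≠ 0 → (w:ℤ) ≤ j := fun n j h =>
    le_of_not_gt fun hl => h (qlow n j hl)
  have qne_high : ∀ n : ℕ, ∀ j : ℤ, q n j ≠ 0 → j ≤ (w:ℤ) + n := fun n j h =>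
    le_of_not_gt fun hl => h (qhigh n j hl)
  have qpat : ∀ n : ℕ, ∀ k : ℤ, q n (k - 1) = 0 → q n k = 0 →
      q n (k - 2) * q n (k + 1) = 0 := by
    intro n k h1 _
    rcases eq_or_ne (q n (k - 2)) 0 with h | h
    · rw [h, zero_mul]
    rcases eq_or_ne (q n (k + 1)) 0 with h' | h'
    · rw [h', mul_zero]
    exfalso
    have l1 := qne_low n (k - 2) h
    have l2 := qne_high n (k + 1) h'
    exact (qpos n (k - 1) (by omega) (by omega)).ne' h1
  -- main joint induction: log-concavity and the auxiliary inequality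
  have main : ∀ n : ℕ, (∀ k : ℤ, q n (k - 1) * q n (k + 1) ≤ q n k ^ 2) ∧
      (∀ k : ℤ, 0 ≤ ((B n : ℝ) - k) * q n k ^ 2
        - ((B n : ℝ) - k - 1) * (q n (k - 1) * q n (k + 1)) - q n (k - 1) * q n k) := by
    intro n
    induction n with
    | zero =>
      constructor
      · intro k
        rcases eq_or_ne (k - 1) ((w:ℕ):ℤ) with h | h
        · have hz : q 0 (k + 1) = 0 := by rw [hq0]; exact if_neg (by omega)
          rw [hz, mul_zero]; positivity
        · have hz : q 0 (k - 1) = 0 := by rw [hq0]; exact if_neg h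
          rw [hz, zero_mul]; positivity
      · intro k
        rcases eq_or_ne k ((w:ℕ):ℤ) with h | h
        · have h1 : q 0 (k - 1) = 0 := by rw [hq0]; exact if_neg (by omega)
          have h2 : q 0 k = 1 := by rw [hq0]; exact if_pos h
          rw [h1, h2]
          have hkB : (k:ℝ) + 1 ≤ (B 0 : ℝ) := by
            exact_mod_cast (by omega : (k:ℤ) + 1 ≤ (B 0 : ℤ))
          nlinarith
        · have h2 : q 0 k = 0 := by rw [hq0]; exact if_neg h
          have h3 : q 0 (k - 1) * q 0 (k + 1) = 0 := by
            rcases eq_or_ne (k - 1) ((w:ℕ):ℤ) with h' | h'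
            · have : q 0 (k + 1) = 0 := by rw [hq0]; exact if_neg (by omega)
              rw [this, mul_zero]
            · have : q 0 (k - 1) = 0 := by rw [hq0]; exact if_neg h'
              rw [this, zero_mul]
          rw [h2, h3]
          norm_num
    | succ n ih =>
      obtain ⟨Ln, An⟩ := ih
      have step : ∀ k : ℤ, (q (n+1) (k - 1) * q (n+1) (k + 1) ≤ q (n+1) k ^ 2) ∧
          (0 ≤ ((B (n+1) : ℝ) - k) * q (n+1) k ^ 2
            - ((B (n+1) : ℝ) - k - 1) * (q (n+1) (k - 1) * q (n+1) (k + 1))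
            - q (n+1) (k - 1) * q (n+1) k) := by
        intro k
        have hβ0 : (B n : ℝ) ≠ 0 := (hBpos n).ne'
        have hX : (B n : ℝ) * q (n+1) k
            = ((k:ℝ) - 1) * q n (k - 1) + ((B n : ℝ) - (k:ℝ)) * q n k := by
          rw [hrec n k]
          field_simp
          try ring
          try tauto
        have hY : (B n : ℝ) * q (n+1) (k - 1)
            = ((k:ℝ) - 2) * q n (k - 2) + ((B n : ℝ) - (k:ℝ) + 1) * q n (k - 1) := by
          rw [hrec n (k - 1), show (k - 1 - 1 : ℤ) = k - 2 from by ring]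
          push_cast
          field_simp
          try ring
          try tauto
        have hZ : (B n : ℝ) * q (n+1) (k + 1)
            = (k:ℝ) * q n k + ((B n : ℝ) - (k:ℝ) - 1) * q n (k + 1) := by
          rw [hrec n (k + 1), show (k + 1 - 1 : ℤ) = k from by ring]
          push_cast
          field_simp
          try ring
          try tauto
        have hbk : q n (k - 1) ≠ 0 → 2 ≤ (k:ℝ) := by
          intro h
          have := qne_low n (k - 1) h
          exact_mod_cast (by omega : (2:ℤ) ≤ k)
        have hck : q n k ≠ 0 → (k:ℝ) + 1 ≤ (B n : ℝ) := by
          intro h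
          have h1 := qne_high n k h
          have h2 := hBn n
          exact_mod_cast (by omega : (k:ℤ) + 1 ≤ (B n : ℤ))
        have Lb : q n (k - 2) * q n k ≤ q n (k - 1) ^ 2 := by
          have := Ln (k - 1)
          rw [show (k - 1 - 1 : ℤ) = k - 2 from by ring,
            show (k - 1 + 1 : ℤ) = k from by ring] at this
          exact this
        have Lc := Ln k
        have H1 : 0 ≤ ((B n : ℝ) - (k:ℝ) + 1) * q n (k - 1) ^ 2
            - ((B n : ℝ) - (k:ℝ)) * (q n (k - 2) * q n k) - q n (k - 2) * q n (k - 1) := by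
          have := An (k - 1)
          rw [show (k - 1 - 1 : ℤ) = k - 2 from by ring,
            show (k - 1 + 1 : ℤ) = k from by ring] at this
          push_cast at this
          nlinarith [this]
        have H2 := An k
        have hM : (B n : ℝ) + 1 ≤ (B (n+1) : ℝ) := by
          exact_mod_cast (by have := hB (show n < n + 1 by omega); omega : B n + 1 ≤ B (n+1))
        have hS1 := urn_S1 (q n (k - 2)) (q n (k - 1)) (q n k) (q n (k + 1))
          (B n : ℝ) (k:ℝ) (qnonneg n (k - 2)) (qnonneg n (k - 1)) (qnonneg n k)
          (qnonneg n (k + 1)) (qpat n k) hbk hck Lb Lc H2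
        have hF := urn_F (q n (k - 2)) (q n (k - 1)) (q n k) (q n (k + 1))
          (B n : ℝ) (k:ℝ) (B (n+1) : ℝ) (qnonneg n (k - 2)) (qnonneg n (k - 1)) (qnonneg n k)
          (qnonneg n (k + 1)) (qpat n k) hbk hck Lb Lc H1 H2 hM
        constructor
        · have e : ((B n : ℝ))^2 * (q (n+1) k ^ 2 - q (n+1) (k - 1) * q (n+1) (k + 1))
              = (((k:ℝ) - 1) * q n (k - 1) + ((B n : ℝ) - (k:ℝ)) * q n k) ^ 2
                - (((k:ℝ) - 2) * q n (k - 2) + ((B n : ℝ) - (k:ℝ) + 1) * q n (k - 1))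
                  * ((k:ℝ) * q n k + ((B n : ℝ) - (k:ℝ) - 1) * q n (k + 1)) := by
            rw [← hX, ← hY, ← hZ]; ring
          have h9 : 0 ≤ ((B n : ℝ))^2 * (q (n+1) k ^ 2 - q (n+1) (k - 1) * q (n+1) (k + 1)) := by
            rw [e]; linarith [hS1]
          have := urn_nonneg_of_mul (by positivity : (0:ℝ) < ((B n : ℝ))^2) h9
          linarith
        · have e : ((B n : ℝ))^2 * (((B (n+1) : ℝ) - k) * q (n+1) k ^ 2
              - ((B (n+1) : ℝ) - k - 1) * (q (n+1) (k - 1) * q (n+1) (k + 1))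
              - q (n+1) (k - 1) * q (n+1) k)
              = ((B (n+1) : ℝ) - (k:ℝ))
                  * (((k:ℝ) - 1) * q n (k - 1) + ((B n : ℝ) - (k:ℝ)) * q n k) ^ 2
                - ((B (n+1) : ℝ) - (k:ℝ) - 1)
                  * ((((k:ℝ) - 2) * q n (k - 2) + ((B n : ℝ) - (k:ℝ) + 1) * q n (k - 1))
                    * ((k:ℝ) * q n k + ((B n : ℝ) - (k:ℝ) - 1) * q n (k + 1)))
                - (((k:ℝ) - 2) * q n (k - 2) + ((B n : ℝ) - (k:ℝ) + 1) * q n (k - 1))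
                  * (((k:ℝ) - 1) * q n (k - 1) + ((B n : ℝ) - (k:ℝ)) * q n k) := by
            rw [← hX, ← hY, ← hZ]; ring
          have h9 : 0 ≤ ((B n : ℝ))^2 * (((B (n+1) : ℝ) - k) * q (n+1) k ^ 2
              - ((B (n+1) : ℝ) - k - 1) * (q (n+1) (k - 1) * q (n+1) (k + 1))
              - q (n+1) (k - 1) * q (n+1) k) := by
            rw [e]; exact hF
          exact urn_nonneg_of_mul (by positivity : (0:ℝ) < ((B n : ℝ))^2) h9
      exact ⟨fun k => (step k).1, fun k => (step k).2⟩
  -- conclude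
  intro n k _
  have hA := (main n).2 k
  have hβ0 : (B n : ℝ) ≠ 0 := (hBpos n).ne'
  have hX : (B n : ℝ) * q (n+1) k
      = ((k:ℝ) - 1) * q n (k - 1) + ((B n : ℝ) - (k:ℝ)) * q n k := by
    rw [hrec n k]
    field_simp
    try ring
    try tauto
  have hZ : (B n : ℝ) * q (n+1) (k + 1)
      = (k:ℝ) * q n k + ((B n : ℝ) - (k:ℝ) - 1) * q n (k + 1) := by
    rw [hrec n (k + 1), show (k + 1 - 1 : ℤ) = k from by ring]
    push_cast
    field_simp
    try ring
    try tauto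
  have key : (B n : ℝ) * (q n (k - 1) * q (n+1) (k + 1))
      ≤ (B n : ℝ) * (q n k * q (n+1) k) := by
    have e1 : (B n : ℝ) * (q n (k - 1) * q (n+1) (k + 1))
        = q n (k - 1) * ((B n : ℝ) * q (n+1) (k + 1)) := by ring
    have e2 : (B n : ℝ) * (q n k * q (n+1) k)
        = q n k * ((B n : ℝ) * q (n+1) k) := by ring
    rw [e1, e2, hX, hZ]
    nlinarith [hA]
  exact le_of_mul_le_mul_left key (hBpos n)
end
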